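/- arXiv:2204.08423 — 6 statements merged into one kernel-verified Lean document; each statement's English description precedes it below -/
import Mathlib

section
/- Let P be a polynomial with integer coefficients of degree r ≥ 2 whose coefficient of x^(r−1) is equal to zero, and let s be a nonzero integer. For every ε > 0 there exists N_0 = N_0(P, s, ε) such that the following holds for all integers N ≥ N_0. Let θ be a real number with 1/1000 ≤ θ ≤ 1/20 and set M = ⌊N^θ⌋. Let β_1, β_2 be positive integer multiples of r with r ≤ β_1 < β_2 ≤ M. Suppose n is an integer with N ≤ n < 2N and x, x_1, x_2 are positive integers satisfying s·n! = P(x), s·(n−β_1)! = P(x_1) and s·(n−β_2)! = P(x_2). Then for each i ∈ {1, 2} there exists an integer p_i such that |∏_{j=1}^{β_i−1} (1 − j/n)^(−1/r) − p_i/x| ≤ x^(ε−2). -/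
open scoped Nat Classical
open Filter Real

section AuxLemmas

lemma aux_prod_fact (n β : ℕ) (h1 : 1 ≤ β) (h2 : β ≤ n) :
    (∏ j ∈ Finset.Icc 1 (β-1), (n - j)) * (n - β)! = (n-1)! := by
  have hd : ∏ j ∈ Finset.Icc 1 (β-1), (n - j) = (n-1).descFactorial (β-1) := by
    rw [Nat.descFactorial_eq_prod_range, ← Finset.Ico_add_one_right_eq_Icc, Finset.prod_Ico_eq_prod_range]
    refine Finset.prod_congr (by congr 1) fun i hi => by omega
  rw [hd, mul_comm]
  have := Nat.factorial_mul_descFactorial (show β - 1 ≤ n - 1 by omega)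
  rw [show n - 1 - (β-1) = n - β by omega] at this
  exact this

lemma aux_prod_real (n β : ℕ) (h1 : 1 ≤ β) (h2 : β ≤ n) (hn : 0 < n) :
    ∏ j ∈ Finset.Icc 1 (β-1), (1 - (j:ℝ)/n) = (n ! : ℝ) / (((n-β)! : ℝ) * (n:ℝ)^β) := by
  have hn0 : (n:ℝ) ≠ 0 := Nat.cast_ne_zero.mpr hn.ne'
  have step : ∏ j ∈ Finset.Icc 1 (β-1), (1 - (j:ℝ)/n)
      = (∏ j ∈ Finset.Icc 1 (β-1), ((n - j : ℕ):ℝ)) / (n:ℝ)^(β-1) := by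
    rw [show ((n:ℝ)^(β-1)) = ∏ _j ∈ Finset.Icc 1 (β-1), (n:ℝ) by
      rw [Finset.prod_const, Nat.card_Icc]; norm_num, ← Finset.prod_div_distrib]
    refine Finset.prod_congr rfl fun j hj => ?_
    have hj' : j ≤ n := le_trans (by simpa using (Finset.mem_Icc.mp hj).2) (by omega)
    rw [Nat.cast_sub hj']
    field_simp
  rw [step]
  have hcast : (∏ j ∈ Finset.Icc 1 (β-1), ((n - j : ℕ):ℝ)) * ((n-β)! : ℝ) = ((n-1)! : ℝ) := by
    push_cast [← aux_prod_fact n β h1 h2]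
    ring
  have hfb : ((n-β)! : ℝ) ≠ 0 := Nat.cast_ne_zero.mpr (Nat.factorial_ne_zero _)
  have hprod : (∏ j ∈ Finset.Icc 1 (β-1), ((n - j : ℕ):ℝ)) = ((n-1)! : ℝ) / ((n-β)! : ℝ) := by
    field_simp [← hcast]
    exact hcast
  rw [hprod]
  have hfact : (n:ℝ) * ((n-1)! : ℝ) = (n ! : ℝ) := by
    exact_mod_cast congrArg (Nat.cast : ℕ → ℝ) (Nat.mul_factorial_pred hn.ne')
  have hpow : (n:ℝ)^β = (n:ℝ) * (n:ℝ)^(β-1) := by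
    rw [← pow_succ']
    congr 1
    omega
  rw [hpow, ← hfact]
  field_simp

lemma aux_two_pow_le_fact : ∀ n : ℕ, 2^(n-1) ≤ n !
  | 0 => by simp
  | 1 => by simp [Nat.factorial]
  | (n+2) => by
      have ih := aux_two_pow_le_fact (n+1)
      have : 2^(n+2-1) = 2 * 2^(n+1-1) := by rw [← pow_succ']; congr 1
      rw [this, Nat.factorial_succ]
      exact Nat.mul_le_mul (by omega) ih

lemma aux_rpow_abs : ∀ t : ℝ, 0 < t → ∀ r : ℕ, 1 ≤ r → |t ^ ((1:ℝ)/r) - 1| ≤ |t - 1| := by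
  intro t ht r hr
  have hr0 : (0:ℝ) < (1:ℝ)/r := by positivity
  have hr1 : (1:ℝ)/r ≤ 1 := by
    rw [div_le_one (by positivity)]
    exact_mod_cast hr
  rcases le_or_gt 1 t with h | h
  · have h1 : 1 ≤ t ^ ((1:ℝ)/r) := Real.one_le_rpow h hr0.le
    have h2 : t ^ ((1:ℝ)/r) ≤ t := by
      calc t ^ ((1:ℝ)/r) ≤ t ^ (1:ℝ) := Real.rpow_le_rpow_of_exponent_le h hr1
      _ = t := Real.rpow_one t
    rw [abs_of_nonneg (by linarith), abs_of_nonneg (by linarith)]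
    linarith
  · have h1 : t ^ ((1:ℝ)/r) ≤ 1 := Real.rpow_le_one ht.le h.le hr0.le
    have h2 : t ≤ t ^ ((1:ℝ)/r) := by
      calc t = t ^ (1:ℝ) := (Real.rpow_one t).symm
      _ ≤ t ^ ((1:ℝ)/r) := Real.rpow_le_rpow_of_exponent_ge ht h.le hr1
    rw [abs_of_nonpos (by linarith), abs_of_nonpos (by linarith)]
    linarith

lemma aux_tail (P : Polynomial ℤ) (r : ℕ) (hr : 2 ≤ r) (hdeg : P.natDegree = r)
    (hcoeff : P.coeff (r - 1) = 0) (t : ℤ) (ht : 1 ≤ (t:ℝ)) :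
    |((P.eval t : ℤ) : ℝ) - (P.leadingCoeff : ℝ) * (t:ℝ)^r|
      ≤ (∑ i ∈ Finset.range (r+1), |(P.coeff i : ℝ)|) * (t:ℝ)^(r-2) := by
  have ht0 : (0:ℝ) ≤ (t:ℝ) := by linarith
  have heval : ((P.eval t : ℤ) : ℝ) = ∑ i ∈ Finset.range (r+1), (P.coeff i : ℝ) * (t:ℝ)^i := by
    rw [Polynomial.eval_eq_sum_range, hdeg]
    push_cast
    rfl
  have hlead : (P.leadingCoeff : ℝ) = (P.coeff r : ℝ) := by
    rw [Polynomial.leadingCoeff, hdeg]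
  rw [heval, hlead, Finset.sum_range_succ, add_sub_cancel_right]
  calc |∑ i ∈ Finset.range r, (P.coeff i : ℝ) * (t:ℝ)^i|
      ≤ ∑ i ∈ Finset.range r, |(P.coeff i : ℝ) * (t:ℝ)^i| := Finset.abs_sum_le_sum_abs _ _
    _ ≤ ∑ i ∈ Finset.range r, |(P.coeff i : ℝ)| * (t:ℝ)^(r-2) := by
        refine Finset.sum_le_sum fun i hi => ?_
        rw [abs_mul, abs_pow, abs_of_nonneg ht0]
        by_cases hi' : i = r - 1
        · simp [hi', hcoeff]
        · have : i ≤ r - 2 := by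
            have := Finset.mem_range.mp hi
            omega
          exact mul_le_mul_of_nonneg_left (pow_le_pow_right₀ ht this) (abs_nonneg _)
    _ = (∑ i ∈ Finset.range r, |(P.coeff i : ℝ)|) * (t:ℝ)^(r-2) := by
        rw [Finset.sum_mul]
    _ ≤ (∑ i ∈ Finset.range (r+1), |(P.coeff i : ℝ)|) * (t:ℝ)^(r-2) := by
        refine mul_le_mul_of_nonneg_right ?_ (by positivity)
        exact Finset.sum_le_sum_of_subset_of_nonneg
          (Finset.range_subset_range.mpr (by omega)) (fun _ _ _ => abs_nonneg _)

lemma aux_ev_main (c ε : ℝ) (hc : 0 < c) (hε : 0 < ε) :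
    ∀ᶠ N : ℕ in atTop,
      c * (2*(N:ℝ)) ^ ((2:ℝ)*(N:ℝ)^((1:ℝ)/20)) ≤ ((N ! : ℕ):ℝ) ^ ε := by
  have hlog2 : (0:ℝ) < Real.log 2 := Real.log_pos (by norm_num)
  have h0 : Tendsto (fun x : ℝ => x^((1:ℝ)/2) * (ε * Real.log 2 * x^((1:ℝ)/2) - 16)
      - (Real.log c + ε * Real.log 2)) atTop atTop := by
    apply tendsto_atTop_add_const_right
    apply Filter.Tendsto.atTop_mul_atTop₀ (tendsto_rpow_atTop (by norm_num))
    apply tendsto_atTop_add_const_right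
    exact (tendsto_rpow_atTop (by norm_num)).const_mul_atTop (by positivity)
  have h1 : ∀ᶠ x : ℝ in atTop,
      Real.log c + 16 * x^((1:ℝ)/2) ≤ ε * (x - 1) * Real.log 2 := by
    filter_upwards [h0.eventually_ge_atTop 0, eventually_ge_atTop (1:ℝ)] with x hx hx1
    have hxx : x^((1:ℝ)/2) * x^((1:ℝ)/2) = x := by
      rw [← Real.rpow_add (by linarith)]
      norm_num
    set u := x^((1:ℝ)/2) with hu
    have hexp : u * (ε * Real.log 2 * u - 16) = ε * Real.log 2 * (u*u) - 16 * u := by ring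
    rw [hexp, hxx] at hx
    linarith
  have h2 : ∀ᶠ N : ℕ in atTop,
      Real.log c + 16 * (N:ℝ)^((1:ℝ)/2) ≤ ε * ((N:ℝ) - 1) * Real.log 2 :=
    tendsto_natCast_atTop_atTop.eventually h1
  filter_upwards [h2, eventually_ge_atTop 1] with N hN hN1
  have hN0 : (0:ℝ) < (N:ℝ) := by exact_mod_cast hN1
  have hN1' : (1:ℝ) ≤ (N:ℝ) := by exact_mod_cast hN1
  have h2N : (0:ℝ) < 2*(N:ℝ) := by linarith
  have hF0 : (0:ℝ) < ((N ! : ℕ):ℝ) := by exact_mod_cast Nat.factorial_pos N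
  rw [← Real.log_le_log_iff (by positivity) (by positivity)]
  rw [Real.log_mul hc.ne' (by positivity), Real.log_rpow h2N, Real.log_rpow hF0]
  have hlog2N : Real.log (2*(N:ℝ)) ≤ 4 * (2*(N:ℝ))^((1:ℝ)/4) := by
    have := Real.log_le_rpow_div h2N.le (show (0:ℝ) < 1/4 by norm_num)
    calc Real.log (2*(N:ℝ)) ≤ (2*(N:ℝ))^((1:ℝ)/4) / (1/4) := this
      _ = 4 * (2*(N:ℝ))^((1:ℝ)/4) := by ring
  have h2N14 : (2*(N:ℝ))^((1:ℝ)/4) ≤ 2 * (N:ℝ)^((1:ℝ)/4) := by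
    rw [Real.mul_rpow (by norm_num) hN0.le]
    have : (2:ℝ)^((1:ℝ)/4) ≤ 2 := by
      calc (2:ℝ)^((1:ℝ)/4) ≤ (2:ℝ)^(1:ℝ) := by
            apply Real.rpow_le_rpow_of_exponent_le (by norm_num) (by norm_num)
        _ = 2 := Real.rpow_one 2
    exact mul_le_mul_of_nonneg_right this (Real.rpow_nonneg hN0.le _)
  have hmerge : (N:ℝ)^((1:ℝ)/20) * (N:ℝ)^((1:ℝ)/4) ≤ (N:ℝ)^((1:ℝ)/2) := by
    rw [← Real.rpow_add hN0]
    apply Real.rpow_le_rpow_of_exponent_le hN1'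
    norm_num
  have hlogN : Real.log (2*(N:ℝ)) ≥ 0 := Real.log_nonneg (by linarith)
  have hNpow : (0:ℝ) ≤ (N:ℝ)^((1:ℝ)/20) := Real.rpow_nonneg hN0.le _
  have key : (2:ℝ)*(N:ℝ)^((1:ℝ)/20) * Real.log (2*(N:ℝ)) ≤ 16 * (N:ℝ)^((1:ℝ)/2) := by
    calc (2:ℝ)*(N:ℝ)^((1:ℝ)/20) * Real.log (2*(N:ℝ))
        ≤ (2:ℝ)*(N:ℝ)^((1:ℝ)/20) * (4 * (2 * (N:ℝ)^((1:ℝ)/4))) := by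
          apply mul_le_mul_of_nonneg_left _ (by positivity)
          calc Real.log (2*(N:ℝ)) ≤ 4 * (2*(N:ℝ))^((1:ℝ)/4) := hlog2N
            _ ≤ 4 * (2 * (N:ℝ)^((1:ℝ)/4)) := by
                exact mul_le_mul_of_nonneg_left h2N14 (by norm_num)
      _ = 16 * ((N:ℝ)^((1:ℝ)/20) * (N:ℝ)^((1:ℝ)/4)) := by ring
      _ ≤ 16 * (N:ℝ)^((1:ℝ)/2) := by
          exact mul_le_mul_of_nonneg_left hmerge (by norm_num)
  have hfactlog : ((N:ℝ) - 1) * Real.log 2 ≤ Real.log ((N ! : ℕ):ℝ) := by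
    have hle : ((2^(N-1) : ℕ):ℝ) ≤ ((N ! : ℕ):ℝ) := by exact_mod_cast aux_two_pow_le_fact N
    calc ((N:ℝ) - 1) * Real.log 2 = ((N - 1 : ℕ):ℝ) * Real.log 2 := by
          rw [Nat.cast_sub hN1]; norm_num
      _ = Real.log (((2:ℝ))^((N-1 : ℕ))) := by rw [Real.log_pow]
      _ ≤ Real.log ((N ! : ℕ):ℝ) := by
          apply Real.log_le_log (by positivity)
          push_cast at hle ⊢
          exact hle
  calc Real.log c + 2*(N:ℝ)^((1:ℝ)/20) * Real.log (2*(N:ℝ))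
      ≤ Real.log c + 16 * (N:ℝ)^((1:ℝ)/2) := by linarith [key]
    _ ≤ ε * ((N:ℝ) - 1) * Real.log 2 := hN
    _ ≤ ε * Real.log ((N ! : ℕ):ℝ) := by
        rw [mul_assoc]
        exact mul_le_mul_of_nonneg_left hfactlog hε.le

lemma aux_ev_half (c : ℝ) : ∀ᶠ N : ℕ in atTop, c ≤ ((N/2 : ℕ):ℝ) := by
  filter_upwards [eventually_ge_atTop (2*⌈c⌉₊ + 2)] with N hN
  have h1 : ⌈c⌉₊ ≤ N/2 := by omega
  calc c ≤ (⌈c⌉₊ : ℝ) := Nat.le_ceil c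
    _ ≤ ((N/2 : ℕ):ℝ) := by exact_mod_cast h1

lemma aux_ev_facthalf (c : ℝ) : ∀ᶠ N : ℕ in atTop, c ≤ ((N/2 : ℕ)! : ℝ) := by
  filter_upwards [aux_ev_half c] with N hN
  calc c ≤ ((N/2 : ℕ):ℝ) := hN
    _ ≤ ((N/2 : ℕ)! : ℝ) := by exact_mod_cast Nat.self_le_factorial _

lemma aux_sqrt16 : ((16:ℝ))^((1:ℝ)/2) = 4 := by
  rw [show (16:ℝ) = 4^(2:ℕ) by norm_num, ← Real.rpow_natCast 4 2, ← Real.rpow_mul (by norm_num)]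
  norm_num

lemma aux_sqrt4 : ((4:ℝ))^((1:ℝ)/2) = 2 := by
  rw [show (4:ℝ) = 2^(2:ℕ) by norm_num, ← Real.rpow_natCast 2 2, ← Real.rpow_mul (by norm_num)]
  norm_num

lemma aux_ev_rpow1 : ∀ᶠ N : ℕ in atTop, (N:ℝ)^((1:ℝ)/20) ≤ ((N/2 : ℕ):ℝ) := by
  filter_upwards [eventually_ge_atTop 16] with N hN
  have hN1 : (1:ℝ) ≤ (N:ℝ) := by exact_mod_cast Nat.one_le_iff_ne_zero.mpr (by omega)
  have hN16 : (16:ℝ) ≤ (N:ℝ) := by exact_mod_cast hN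
  have h4 : (4:ℝ) ≤ (N:ℝ)^((1:ℝ)/2) := by
    have := Real.rpow_le_rpow (by norm_num : (0:ℝ) ≤ 16) hN16 (by norm_num : (0:ℝ) ≤ (1:ℝ)/2)
    rwa [aux_sqrt16] at this
  have hhalf : (N:ℝ)^((1:ℝ)/2) * (N:ℝ)^((1:ℝ)/2) = (N:ℝ) := by
    rw [← Real.rpow_add (by linarith)]; norm_num
  have h120 : (N:ℝ)^((1:ℝ)/20) ≤ (N:ℝ)^((1:ℝ)/2) :=
    Real.rpow_le_rpow_of_exponent_le hN1 (by norm_num)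
  have hsq : (N:ℝ)^((1:ℝ)/2) ≤ (N:ℝ)/4 := by
    nlinarith [h4, hhalf]
  have hcast : 2*((N/2 : ℕ):ℝ) + 1 ≥ (N:ℝ) := by
    have : 2*(N/2) + 1 ≥ N := by omega
    exact_mod_cast this
  linarith

lemma aux_ev_rpow2 : ∀ᶠ N : ℕ in atTop, 2*((N:ℝ)^((1:ℝ)/20))^2 ≤ (N:ℝ) := by
  filter_upwards [eventually_ge_atTop 4] with N hN
  have hN1 : (1:ℝ) ≤ (N:ℝ) := by exact_mod_cast Nat.one_le_iff_ne_zero.mpr (by omega)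
  have hN4 : (4:ℝ) ≤ (N:ℝ) := by exact_mod_cast hN
  have h2 : (2:ℝ) ≤ (N:ℝ)^((1:ℝ)/2) := by
    have := Real.rpow_le_rpow (by norm_num : (0:ℝ) ≤ 4) hN4 (by norm_num : (0:ℝ) ≤ (1:ℝ)/2)
    rwa [aux_sqrt4] at this
  have hhalf : (N:ℝ)^((1:ℝ)/2) * (N:ℝ)^((1:ℝ)/2) = (N:ℝ) := by
    rw [← Real.rpow_add (by linarith)]; norm_num
  have hsq : ((N:ℝ)^((1:ℝ)/20))^2 = (N:ℝ)^((1:ℝ)/10) := by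
    rw [← Real.rpow_natCast ((N:ℝ)^((1:ℝ)/20)) 2, ← Real.rpow_mul (by linarith)]
    norm_num
  rw [hsq]
  have h110 : (N:ℝ)^((1:ℝ)/10) ≤ (N:ℝ)^((1:ℝ)/2) :=
    Real.rpow_le_rpow_of_exponent_le hN1 (by norm_num)
  nlinarith [h2, hhalf, h110]

lemma aux_le_sq (c B X : ℝ) (h1 : c ≤ B) (h2 : 1 ≤ B) (h3 : B ≤ X) : c ≤ X^2 := by
  nlinarith

end AuxLemmas

set_option maxHeartbeats 2000000 in
/-- **Solutions imply simultaneous rational approximation** (Lemma 3.3).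
Let `P ∈ ℤ[x]` have degree `r ≥ 2` with the coefficient of `x^(r−1)` equal to zero, and let
`s ≠ 0` be an integer. For every `ε > 0` there is `N₀` such that for all `N ≥ N₀`: with
`θ ∈ [1/1000, 1/20]`, `M = ⌊N^θ⌋`, `β₁ < β₂` positive multiples of `r` with
`r ≤ β₁ < β₂ ≤ M`, if `n ∈ [N, 2N)` and positive integers `x, x₁, x₂` satisfy
`s·n! = P(x)`, `s·(n−β₁)! = P(x₁)`, `s·(n−β₂)! = P(x₂)`, then for each `i ∈ {1,2}` there is an
integer `pᵢ` with `|∏_{j=1}^{βᵢ−1} (1 − j/n)^(−1/r) − pᵢ/x| ≤ x^(ε−2)`. -/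
theorem solutions_imply_simultaneous_rational_approximation
    (P : Polynomial ℤ) (r : ℕ) (hr : 2 ≤ r) (hdeg : P.natDegree = r)
    (hcoeff : P.coeff (r - 1) = 0) (s : ℤ) (hs : s ≠ 0)
    (ε : ℝ) (hε : 0 < ε) :
    ∃ N₀ : ℕ, ∀ N : ℕ, N₀ ≤ N →
      ∀ θ : ℝ, 1 / 1000 ≤ θ → θ ≤ 1 / 20 →
      ∀ M : ℕ, M = ⌊(N : ℝ) ^ θ⌋₊ →
      ∀ β₁ β₂ : ℕ, r ∣ β₁ → r ∣ β₂ → r ≤ β₁ → β₁ < β₂ → β₂ ≤ M →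
      ∀ n : ℕ, N ≤ n → n < 2 * N →
      ∀ x x₁ x₂ : ℕ, 0 < x → 0 < x₁ → 0 < x₂ →
        s * (n ! : ℤ) = P.eval (x : ℤ) →
        s * ((n - β₁)! : ℤ) = P.eval (x₁ : ℤ) →
        s * ((n - β₂)! : ℤ) = P.eval (x₂ : ℤ) →
        ∀ β ∈ ({β₁, β₂} : Set ℕ), ∃ p : ℤ,
          |(∏ j ∈ Finset.Icc 1 (β - 1), (1 - (j : ℝ) / n) ^ (-(1 : ℝ) / r))
              - (p : ℝ) / x| ≤ (x : ℝ) ^ (ε - 2) := by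
  classical
  set aR : ℝ := (P.leadingCoeff : ℝ) with haRdef
  set A0 : ℝ := |aR| with hA0def
  set CC : ℝ := ∑ i ∈ Finset.range (r+1), |(P.coeff i : ℝ)| with hCCdef
  have hPne : P ≠ 0 := by
    intro h
    rw [h] at hdeg
    simp at hdeg
    omega
  have hA0 : 0 < A0 := by
    rw [hA0def, haRdef]
    exact abs_pos.mpr (Int.cast_ne_zero.mpr (Polynomial.leadingCoeff_ne_zero.mpr hPne))
  have hA0CC : A0 ≤ CC := by
    rw [hCCdef, hA0def, haRdef, Polynomial.leadingCoeff, hdeg]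
    exact Finset.single_le_sum (f := fun i => |(P.coeff i:ℝ)|)
      (fun i _ => abs_nonneg _) (Finset.self_mem_range_succ r)
  have hCC : 0 < CC := lt_of_lt_of_le hA0 hA0CC
  set SS : ℝ := |(s:ℝ)| with hSSdef
  have hSS : 1 ≤ SS := by
    rw [hSSdef, show ((s:ℝ)) = ((s:ℤ):ℝ) by norm_num, ← Int.cast_abs]
    exact_mod_cast Int.one_le_abs hs
  have hSS0 : 0 < SS := lt_of_lt_of_le one_pos hSS
  set K : ℝ := 8*CC/A0 with hKdef
  have hK : 0 < K := by positivity
  set B' : ℝ := max (8*CC/A0) 1 with hB'def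
  have hB'1 : 1 ≤ B' := le_max_right _ _
  have hB'0 : 0 < B' := lt_of_lt_of_le one_pos hB'1
  set c₂ : ℝ := (2*K)^r * (2*SS/A0)^2 * (A0+CC)^2 * (A0+CC)^ε with hc₂def
  have hApCC : 0 < A0 + CC := by positivity
  have hc₂ : 0 < c₂ := by
    rw [hc₂def]
    have : (0:ℝ) < (A0+CC)^ε := Real.rpow_pos_of_pos hApCC ε
    positivity
  -- combine eventual conditions
  have hev := (aux_ev_rpow1.and (aux_ev_rpow2.and ((aux_ev_facthalf ((A0+CC) * B'^r)).and
    ((aux_ev_half (max 1 (2*SS*(A0+CC)/A0))).and ((aux_ev_main c₂ ε hc₂ hε).and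
    (eventually_ge_atTop 2))))))
  obtain ⟨N₀, hN₀⟩ := Filter.eventually_atTop.mp hev
  refine ⟨N₀, ?_⟩
  intro N hNN₀ θ hθ1 hθ2 M hM β₁ β₂ hd1 hd2 hrβ1 hβ12 hβ2M n hn1 hn2
    x x₁ x₂ hx hx1 hx2 hPx hPx1 hPx2
  obtain ⟨hev1, hev2, hev3, hev4, hev5, hN2⟩ := hN₀ N hNN₀
  have hNR1 : (1:ℝ) ≤ (N:ℝ) := by exact_mod_cast (by omega : 1 ≤ N)
  have hMreal : (M:ℝ) ≤ (N:ℝ)^((1:ℝ)/20) := by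
    rw [hM]
    calc ((⌊(N : ℝ) ^ θ⌋₊ : ℕ):ℝ) ≤ (N:ℝ)^θ := Nat.floor_le (Real.rpow_nonneg (by positivity) _)
      _ ≤ (N:ℝ)^((1:ℝ)/20) := Real.rpow_le_rpow_of_exponent_le hNR1 hθ2
  have hMhalf : M ≤ N/2 := by
    have : (M:ℝ) ≤ ((N/2 : ℕ):ℝ) := le_trans hMreal hev1
    exact_mod_cast this
  -- the main claim, for a generic (β, y)
  have key : ∀ β y : ℕ, r ∣ β → r ≤ β → β ≤ M → 0 < y →
      s * ((n - β)! : ℤ) = P.eval (y:ℤ) → ∃ p : ℤ,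
      |(∏ j ∈ Finset.Icc 1 (β - 1), (1 - (j : ℝ) / n) ^ (-(1 : ℝ) / r))
        - (p : ℝ) / x| ≤ (x:ℝ)^(ε-2) := by
    intro β y hβr hβ1 hβM hy hPy
    -- basic nat facts
    have hβ2 : 2 ≤ β := le_trans hr hβ1
    have hβhalf : β ≤ N/2 := le_trans hβM hMhalf
    have hβn : β ≤ n := by
      have := Nat.div_le_self N 2
      omega
    have hnb : N/2 ≤ n - β := by omega
    have hn0 : 0 < n := by omega
    have hrR0 : ((r:ℝ)) ≠ 0 := by positivity
    have hr1R : (1:ℝ)/r ≤ 1 := by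
      rw [div_le_one (by positivity)]
      exact_mod_cast (by omega : 1 ≤ r)
    -- real abbreviations
    set X : ℝ := (x:ℝ) with hXdef
    set Y : ℝ := (y:ℝ) with hYdef
    have hX1 : 1 ≤ X := by rw [hXdef]; exact_mod_cast Nat.one_le_iff_ne_zero.mpr hx.ne'
    have hY1 : 1 ≤ Y := by rw [hYdef]; exact_mod_cast Nat.one_le_iff_ne_zero.mpr hy.ne'
    have hX0 : 0 < X := by linarith
    have hY0 : 0 < Y := by linarith
    set Fn : ℝ := ((n !:ℕ):ℝ) with hFndef
    set Fb : ℝ := (((n-β)!:ℕ):ℝ) with hFbdef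
    have hFn0 : 0 < Fn := by rw [hFndef]; exact_mod_cast Nat.factorial_pos n
    have hFb0 : 0 < Fb := by rw [hFbdef]; exact_mod_cast Nat.factorial_pos (n-β)
    -- the polynomial equations over ℝ
    have hPx' : ((P.eval ((x:ℕ):ℤ) : ℤ):ℝ) = (s:ℝ) * Fn := by
      rw [← hPx]; push_cast; ring
    have hPy' : ((P.eval ((y:ℕ):ℤ) : ℤ):ℝ) = (s:ℝ) * Fb := by
      rw [← hPy]; push_cast; ring
    -- tail bounds
    have htx := aux_tail P r hr hdeg hcoeff ((x:ℕ):ℤ) (by push_cast; exact hX1)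
    have hty := aux_tail P r hr hdeg hcoeff ((y:ℕ):ℤ) (by push_cast; exact hY1)
    rw [hPx'] at htx
    rw [hPy'] at hty
    have hcx : (((x:ℕ):ℤ):ℝ) = X := by push_cast; rfl
    have hcy : (((y:ℕ):ℤ):ℝ) = Y := by push_cast; rfl
    rw [hcx] at htx
    rw [hcy] at hty
    -- htx : |s*Fn - aR*X^r| ≤ CC * X^(r-2), similarly hty
    have hxpow : X^(r-2) ≤ X^r := pow_le_pow_right₀ hX1 (by omega)
    have hypow : Y^(r-2) ≤ Y^r := pow_le_pow_right₀ hY1 (by omega)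
    have habsXr : |aR * X^r| = A0 * X^r := by
      rw [abs_mul, abs_pow, abs_of_nonneg hX0.le]
    have habsYr : |aR * Y^r| = A0 * Y^r := by
      rw [abs_mul, abs_pow, abs_of_nonneg hY0.le]
    have habsFn : |(s:ℝ) * Fn| = SS * Fn := by rw [abs_mul, abs_of_pos hFn0]
    have habsFb : |(s:ℝ) * Fb| = SS * Fb := by rw [abs_mul, abs_of_pos hFb0]
    -- upper bounds on factorials by powers
    have hb1 : SS * Fn ≤ (A0+CC) * X^r := by
      have h := abs_add_le (aR * X^r) ((s:ℝ)*Fn - aR*X^r)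
      rw [show aR * X^r + ((s:ℝ)*Fn - aR*X^r) = (s:ℝ)*Fn by ring, habsFn, habsXr] at h
      have h2 : CC * X^(r-2) ≤ CC * X^r := mul_le_mul_of_nonneg_left hxpow hCC.le
      have h3 : (A0+CC)*X^r = A0*X^r + CC*X^r := by ring
      linarith [htx]
    have hb2 : SS * Fb ≤ (A0+CC) * Y^r := by
      have h := abs_add_le (aR * Y^r) ((s:ℝ)*Fb - aR*Y^r)
      rw [show aR * Y^r + ((s:ℝ)*Fb - aR*Y^r) = (s:ℝ)*Fb by ring, habsFb, habsYr] at h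
      have h2 : CC * Y^(r-2) ≤ CC * Y^r := mul_le_mul_of_nonneg_left hypow hCC.le
      have h3 : (A0+CC)*Y^r = A0*Y^r + CC*Y^r := by ring
      linarith [hty]
    have hb1' : Fn ≤ (A0+CC) * X^r := le_trans (le_mul_of_one_le_left hFn0.le hSS) hb1
    have hb2' : Fb ≤ (A0+CC) * Y^r := le_trans (le_mul_of_one_le_left hFb0.le hSS) hb2
    -- factorial lower bounds
    have hfn_half : ((N/2 : ℕ)! : ℝ) ≤ Fn := by
      have h : (N/2)! ≤ n ! := Nat.factorial_le (by omega)
      rw [hFndef]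
      exact_mod_cast h
    have hfb_half : ((N/2 : ℕ)! : ℝ) ≤ Fb := by
      have h : (N/2)! ≤ (n-β)! := Nat.factorial_le hnb
      rw [hFbdef]
      exact_mod_cast h
    -- X, Y ≥ B'
    have hXB : B' ≤ X := by
      have h1 : (A0+CC) * B'^r ≤ (A0+CC) * X^r := le_trans hev3 (le_trans hfn_half hb1')
      have h2 : B'^r ≤ X^r := le_of_mul_le_mul_left h1 hApCC
      exact (pow_le_pow_iff_left₀ hB'0.le hX0.le (by omega)).mp h2
    have hYB : B' ≤ Y := by
      have h1 : (A0+CC) * B'^r ≤ (A0+CC) * Y^r := le_trans hev3 (le_trans hfb_half hb2')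
      have h2 : B'^r ≤ Y^r := le_of_mul_le_mul_left h1 hApCC
      exact (pow_le_pow_iff_left₀ hB'0.le hY0.le (by omega)).mp h2
    have hX2 : 8*CC/A0 ≤ X^2 := by
      exact aux_le_sq _ _ _ (le_max_left _ _) hB'1 hXB
    have hY2 : 8*CC/A0 ≤ Y^2 := by
      exact aux_le_sq _ _ _ (le_max_left _ _) hB'1 hYB
    -- pow splits
    have hXr_split : X^r = X^(r-2) * X^2 := by
      rw [← pow_add]
      congr 1
      omega
    have hYr_split : Y^r = Y^(r-2) * Y^2 := by
      rw [← pow_add]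
      congr 1
      omega
    have hXr2_0 : (0:ℝ) < X^(r-2) := by positivity
    have hYr2_0 : (0:ℝ) < Y^(r-2) := by positivity
    have hCCX : CC * X^(r-2) ≤ A0/2 * X^r := by
      rw [hXr_split]
      have h1 : A0/2 * X^2 ≥ 4*CC := by
        have := mul_le_mul_of_nonneg_left hX2 (by positivity : (0:ℝ) ≤ A0/2)
        rw [show A0/2*(8*CC/A0) = 4*CC by field_simp; ring] at this
        linarith
      have h2 := mul_le_mul_of_nonneg_left h1 hXr2_0.le
      have h3 : (0:ℝ) ≤ CC*X^(r-2) := by positivity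
      linarith [h2, h3]
    have hCCY : CC * Y^(r-2) ≤ A0/2 * Y^r := by
      rw [hYr_split]
      have h1 : A0/2 * Y^2 ≥ 4*CC := by
        have := mul_le_mul_of_nonneg_left hY2 (by positivity : (0:ℝ) ≤ A0/2)
        rw [show A0/2*(8*CC/A0) = 4*CC by field_simp; ring] at this
        linarith
      have h2 := mul_le_mul_of_nonneg_left h1 hYr2_0.le
      have h3 : (0:ℝ) ≤ CC*Y^(r-2) := by positivity
      linarith [h2, h3]
    -- lower bounds |P| ≥ A0 X^r / 2
    have hlowX : A0/2 * X^r ≤ SS * Fn := by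
      have h := abs_sub_abs_le_abs_sub (aR*X^r) ((s:ℝ)*Fn)
      rw [habsXr, habsFn, abs_sub_comm] at h
      linarith [htx, hCCX]
    have hlowY : A0/2 * Y^r ≤ SS * Fb := by
      have h := abs_sub_abs_le_abs_sub (aR*Y^r) ((s:ℝ)*Fb)
      rw [habsYr, habsFb, abs_sub_comm] at h
      linarith [hty, hCCY]
    have hupX : X^r ≤ 2*SS*Fn/A0 := by
      rw [le_div_iff₀ hA0]
      linarith [hlowX]
    have hupY : Y^r ≤ 2*SS*Fb/A0 := by
      rw [le_div_iff₀ hA0]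
      linarith [hlowY]
    -- y ≤ x
    have hW2 : max 1 (2*SS*(A0+CC)/A0) ≤ ((N/2 : ℕ):ℝ) := hev4
    have hv1 : (1:ℝ) ≤ ((N/2 : ℕ):ℝ) := le_trans (le_max_left _ _) hW2
    have hv2 : 2*SS*(A0+CC)/A0 ≤ ((N/2 : ℕ):ℝ) := le_trans (le_max_right _ _) hW2
    have hdesc : ((n - β)! * (N/2)^2 : ℕ) ≤ n ! := by
      have h1 := Nat.factorial_mul_descFactorial hβn
      have h2 : (n + 1 - β)^β ≤ n.descFactorial β := Nat.pow_sub_le_descFactorial n β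
      have h3 : (N/2)^2 ≤ (n + 1 - β)^β := by
        calc (N/2)^2 ≤ (n+1-β)^2 := Nat.pow_le_pow_left (by omega) 2
          _ ≤ (n+1-β)^β := Nat.pow_le_pow_right (by omega) hβ2
      calc (n-β)! * (N/2)^2 ≤ (n-β)! * n.descFactorial β :=
            Nat.mul_le_mul_left _ (le_trans h3 h2)
        _ = n ! := h1
    have hFnFb : Fb * ((N/2 : ℕ):ℝ)^2 ≤ Fn := by
      rw [hFndef, hFbdef]
      exact_mod_cast hdesc
    have hyx : y ≤ x := by
      have hXrFb : 2*SS*Fb/A0 ≤ X^r := by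
        rw [div_le_iff₀ hA0]
        have h1 : Fb * (2*SS*(A0+CC)/A0) ≤ Fb * ((N/2 : ℕ):ℝ)^2 := by
          apply mul_le_mul_of_nonneg_left _ hFb0.le
          calc 2*SS*(A0+CC)/A0 ≤ ((N/2 : ℕ):ℝ) := hv2
            _ ≤ ((N/2 : ℕ):ℝ)^2 := le_self_pow₀ hv1 (by norm_num)
        have h2 : Fb * (2*SS*(A0+CC)/A0) ≤ (A0+CC) * X^r := le_trans h1 (le_trans hFnFb hb1')
        have h3 : Fb * (2*SS*(A0+CC)/A0) = (A0+CC) * (2*SS*Fb/A0) := by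
          field_simp
        rw [h3] at h2
        have h4 : 2*SS*Fb/A0 ≤ X^r := le_of_mul_le_mul_left h2 hApCC
        rw [div_le_iff₀ hA0] at h4
        linarith
      have hYrXr : Y^r ≤ X^r := le_trans hupY hXrFb
      have : Y ≤ X := (pow_le_pow_iff_left₀ hY0.le hX0.le (by omega)).mp hYrXr
      rw [hXdef, hYdef] at this
      exact_mod_cast this
    have hYX : Y ≤ X := by rw [hXdef, hYdef]; exact_mod_cast hyx
    -- the product AA
    set AA : ℝ := ∏ j ∈ Finset.Icc 1 (β-1), (1 - (j:ℝ)/n) with hAAdef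
    have hfactors : ∀ j ∈ Finset.Icc 1 (β-1), 0 ≤ 1 - (j:ℝ)/n := by
      intro j hj
      have hj' : j ≤ n := le_trans (by simpa using (Finset.mem_Icc.mp hj).2) (by omega)
      have : (j:ℝ) ≤ (n:ℝ) := by exact_mod_cast hj'
      have hnpos : (0:ℝ) < n := by exact_mod_cast hn0
      rw [sub_nonneg, div_le_one hnpos]
      exact this
    have hAA_eq : AA = Fn / (Fb * (n:ℝ)^β) := by
      rw [hAAdef, hFndef, hFbdef]
      exact aux_prod_real n β (by omega) hβn hn0
    have hAApos : 0 < AA := by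
      rw [hAA_eq]
      have hnpos : (0:ℝ) < n := by exact_mod_cast hn0
      positivity
    have hAAle1 : AA ≤ 1 := by
      rw [hAAdef]
      apply Finset.prod_le_one hfactors
      intro j hj
      have hnpos : (0:ℝ) < n := by exact_mod_cast hn0
      have : (0:ℝ) ≤ (j:ℝ)/n := by positivity
      linarith
    -- AA ≥ 1/2
    have hβreal : (β:ℝ) ≤ (N:ℝ)^((1:ℝ)/20) := by
      calc (β:ℝ) ≤ (M:ℝ) := by exact_mod_cast hβM
        _ ≤ (N:ℝ)^((1:ℝ)/20) := hMreal
    have hβsq : 2*(β:ℝ)^2 ≤ (n:ℝ) := by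
      have h1 : (β:ℝ)^2 ≤ ((N:ℝ)^((1:ℝ)/20))^2 :=
        pow_le_pow_left₀ (by positivity) hβreal 2
      have h2 : (N:ℝ) ≤ (n:ℝ) := by exact_mod_cast hn1
      linarith [hev2]
    have hAAhalf : 1/2 ≤ AA := by
      have hnpos : (0:ℝ) < n := by exact_mod_cast hn0
      have hβn' : (β:ℝ) ≤ (n:ℝ) := by exact_mod_cast hβn
      have hstep1 : ((1:ℝ) - (β:ℝ)/n)^(β-1) ≤ AA := by
        have hcard : (Finset.Icc 1 (β-1)).card = β - 1 := by
          rw [Nat.card_Icc]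
          omega
        rw [hAAdef, show ((1:ℝ) - (β:ℝ)/n)^(β-1)
          = ∏ _j ∈ Finset.Icc 1 (β-1), ((1:ℝ) - (β:ℝ)/n) by rw [Finset.prod_const, hcard]]
        apply Finset.prod_le_prod
        · intro j hj
          have : (β:ℝ)/n ≤ 1 := by rw [div_le_one hnpos]; exact hβn'
          linarith
        · intro j hj
          have hj2 : (j:ℝ) ≤ (β:ℝ) := by
            have := (Finset.mem_Icc.mp hj).2
            have : j ≤ β := by omega
            exact_mod_cast this
          have : (j:ℝ)/n ≤ (β:ℝ)/n := by
            gcongr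
          linarith
      have hstep2 : 1 - ((β-1:ℕ):ℝ)*((β:ℝ)/n) ≤ ((1:ℝ) - (β:ℝ)/n)^(β-1) := by
        have hB : -2 ≤ -((β:ℝ)/n) := by
          have : (β:ℝ)/n ≤ 1 := by rw [div_le_one hnpos]; exact hβn'
          linarith
        have := one_add_mul_le_pow hB (β-1)
        calc 1 - ((β-1:ℕ):ℝ)*((β:ℝ)/n) = 1 + ((β-1:ℕ):ℝ)*(-((β:ℝ)/n)) := by ring
          _ ≤ (1 + -((β:ℝ)/n))^(β-1) := this
          _ = ((1:ℝ) - (β:ℝ)/n)^(β-1) := by ring_nf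
      have hstep3 : (1:ℝ)/2 ≤ 1 - ((β-1:ℕ):ℝ)*((β:ℝ)/n) := by
        have hc : ((β-1:ℕ):ℝ) ≤ (β:ℝ) := by
          have : β - 1 ≤ β := by omega
          exact_mod_cast this
        have hb0 : (0:ℝ) ≤ (β:ℝ) := by positivity
        have hbn0 : (0:ℝ) ≤ (β:ℝ)/n := by positivity
        have h1 : ((β-1:ℕ):ℝ)*((β:ℝ)/n) ≤ (β:ℝ)*((β:ℝ)/n) :=
          mul_le_mul_of_nonneg_right hc hbn0
        have h2 : (β:ℝ)*((β:ℝ)/n) ≤ 1/2 := by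
          rw [mul_div_assoc', div_le_iff₀ hnpos]
          have : (β:ℝ)*(β:ℝ) = (β:ℝ)^2 := by ring
          linarith [hβsq]
        linarith
      linarith
    -- t and w
    have hnpos : (0:ℝ) < n := by exact_mod_cast hn0
    set t : ℝ := Fb * X^r / (Fn * Y^r) with htdef
    have ht0 : 0 < t := by positivity
    set w : ℝ := (n:ℝ)^(β/r) * Y / X with hwdef
    have hw0 : 0 < w := by positivity
    have hwr : w^r = (n:ℝ)^β * Y^r / X^r := by
      rw [hwdef, div_pow, mul_pow, ← pow_mul, Nat.div_mul_cancel hβr]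
    have hAAinv : AA⁻¹ = w^r * t := by
      rw [hAA_eq, hwr, htdef]
      field_simp
    have hprod_rpow : (∏ j ∈ Finset.Icc 1 (β - 1), (1 - (j : ℝ) / n) ^ (-(1 : ℝ) / r))
        = AA ^ (-(1:ℝ)/r) := by
      rw [hAAdef]
      exact Real.finset_prod_rpow _ _ hfactors _
    have hwrpow : ((w^r : ℝ)) ^ ((1:ℝ)/r) = w := by
      rw [← Real.rpow_natCast w r, ← Real.rpow_mul hw0.le, mul_one_div, div_self hrR0,
        Real.rpow_one]
    have hT : AA ^ (-(1:ℝ)/r) = w * t ^ ((1:ℝ)/r) := by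
      rw [neg_div, Real.rpow_neg hAApos.le, ← Real.inv_rpow hAApos.le, hAAinv,
        Real.mul_rpow (by positivity) ht0.le, hwrpow]
    refine ⟨((n^(β/r) * y : ℕ) : ℤ), ?_⟩
    have hp : ((((n^(β/r) * y : ℕ) : ℤ)):ℝ)/X = w := by
      rw [hwdef, hYdef]
      push_cast
      ring
    rw [hprod_rpow, hT, hp]
    have habs0 : w * t^((1:ℝ)/r) - w = w * (t^((1:ℝ)/r) - 1) := by ring
    rw [habs0, abs_mul, abs_of_pos hw0]
    -- |t - 1| bound
    set u2 : ℝ := X^(r-2) with hu2def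
    set v2 : ℝ := Y^(r-2) with hv2def
    have htm1 : |t - 1| ≤ 2*CC/A0 * (1/X^2 + 1/Y^2) := by
      have hden : (0:ℝ) < Fn * Y^r := by positivity
      have h1 : t - 1 = (Fb*X^r - Fn*Y^r)/(Fn*Y^r) := by
        rw [htdef]
        field_simp
      have h2 : SS * |Fb*X^r - Fn*Y^r| ≤ CC*(v2*X^r) + CC*(u2*Y^r) := by
        have e1 : (s:ℝ)*(Fb*X^r - Fn*Y^r)
            = ((s:ℝ)*Fb - aR*Y^r)*X^r - ((s:ℝ)*Fn - aR*X^r)*Y^r := by ring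
        calc SS * |Fb*X^r - Fn*Y^r| = |(s:ℝ)*(Fb*X^r - Fn*Y^r)| := (abs_mul _ _).symm
          _ = |((s:ℝ)*Fb - aR*Y^r)*X^r - ((s:ℝ)*Fn - aR*X^r)*Y^r| := by rw [e1]
          _ ≤ |((s:ℝ)*Fb - aR*Y^r)*X^r| + |((s:ℝ)*Fn - aR*X^r)*Y^r| := abs_sub _ _
          _ = |(s:ℝ)*Fb - aR*Y^r| * X^r + |(s:ℝ)*Fn - aR*X^r| * Y^r := by
              rw [abs_mul, abs_mul, abs_of_nonneg (pow_nonneg hX0.le r),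
                abs_of_nonneg (pow_nonneg hY0.le r)]
          _ ≤ CC*(v2*X^r) + CC*(u2*Y^r) := by
              have k1 : |(s:ℝ)*Fb - aR*Y^r| * X^r ≤ (CC*v2)*X^r :=
                mul_le_mul_of_nonneg_right hty (pow_nonneg hX0.le r)
              have k2 : |(s:ℝ)*Fn - aR*X^r| * Y^r ≤ (CC*u2)*Y^r :=
                mul_le_mul_of_nonneg_right htx (pow_nonneg hY0.le r)
              calc |(s:ℝ)*Fb - aR*Y^r| * X^r + |(s:ℝ)*Fn - aR*X^r| * Y^r
                  ≤ (CC*v2)*X^r + (CC*u2)*Y^r := add_le_add k1 k2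
                _ = CC*(v2*X^r) + CC*(u2*Y^r) := by ring
      have h3 : A0/(2*SS) * X^r ≤ Fn := by
        rw [div_mul_eq_mul_div, div_le_iff₀ (by positivity)]
        calc A0 * X^r = 2 * (A0/2 * X^r) := by ring
          _ ≤ 2 * (SS * Fn) := by linarith [hlowX]
          _ = Fn * (2*SS) := by ring
      rw [h1, abs_div, abs_of_pos hden, div_le_iff₀ hden]
      have h4 : |Fb*X^r - Fn*Y^r| ≤ (CC*(v2*X^r) + CC*(u2*Y^r))/SS := by
        rw [le_div_iff₀ hSS0]
        linarith [h2]
      have h5 : (CC*(v2*X^r) + CC*(u2*Y^r))/SS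
          = (2*CC/A0 * (1/X^2 + 1/Y^2)) * ((A0/(2*SS)*X^r) * Y^r) := by
        rw [hXr_split, hYr_split]
        field_simp
        ring
      calc |Fb*X^r - Fn*Y^r| ≤ (CC*(v2*X^r) + CC*(u2*Y^r))/SS := h4
        _ = (2*CC/A0 * (1/X^2 + 1/Y^2)) * ((A0/(2*SS)*X^r) * Y^r) := h5
        _ ≤ (2*CC/A0 * (1/X^2 + 1/Y^2)) * (Fn * Y^r) := by
            apply mul_le_mul_of_nonneg_left _ (by positivity)
            exact mul_le_mul_of_nonneg_right h3 (by positivity)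
    -- |t - 1| ≤ 1/2 and consequences
    have hinvX : 1/X^2 ≤ A0/(8*CC) := by
      rw [div_le_div_iff₀ (by positivity) (by positivity)]
      rw [div_le_iff₀ hA0] at hX2
      linarith
    have hinvY : 1/Y^2 ≤ A0/(8*CC) := by
      rw [div_le_div_iff₀ (by positivity) (by positivity)]
      rw [div_le_iff₀ hA0] at hY2
      linarith
    have htm1' : |t - 1| ≤ 1/2 := by
      have heq : 2*CC/A0 * (A0/(8*CC) + A0/(8*CC)) = 1/2 := by
        field_simp
        ring
      calc |t-1| ≤ 2*CC/A0 * (1/X^2 + 1/Y^2) := htm1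
        _ ≤ 2*CC/A0 * (A0/(8*CC) + A0/(8*CC)) := by
            apply mul_le_mul_of_nonneg_left (add_le_add hinvX hinvY) (by positivity)
        _ = 1/2 := heq
    have ht_half : 1/2 ≤ t := by
      have h := abs_le.mp htm1'
      linarith [h.1]
    have htr_half : 1/2 ≤ t^((1:ℝ)/r) := by
      calc (1/2:ℝ) = ((1:ℝ)/2)^(1:ℝ) := (Real.rpow_one _).symm
        _ ≤ ((1:ℝ)/2)^((1:ℝ)/r) :=
            Real.rpow_le_rpow_of_exponent_ge (by norm_num) (by norm_num) hr1R
        _ ≤ t^((1:ℝ)/r) := Real.rpow_le_rpow (by norm_num) ht_half (by positivity)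
    have hT2 : AA ^ (-(1:ℝ)/r) ≤ 2 := by
      have h1 : AA ^ (-(1:ℝ)/r) ≤ AA ^ (-1:ℝ) := by
        rw [neg_div]
        apply Real.rpow_le_rpow_of_exponent_ge hAApos hAAle1
        linarith [hr1R]
      rw [Real.rpow_neg_one] at h1
      have h2 : AA⁻¹ ≤ ((1:ℝ)/2)⁻¹ := inv_anti₀ (by norm_num) hAAhalf
      norm_num at h2
      linarith
    have hw4 : w ≤ 4 := by
      have h1 : w = AA ^ (-(1:ℝ)/r) / t^((1:ℝ)/r) := by
        rw [hT]
        field_simp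
      rw [h1]
      calc AA ^ (-(1:ℝ)/r) / t^((1:ℝ)/r) ≤ 2 / ((1:ℝ)/2) := by
            apply div_le_div₀ (by norm_num) hT2 (by norm_num) htr_half
        _ = 4 := by norm_num
    -- the main diophantine inequality
    have hXεpow : (X^(ε:ℝ))^r = (X^r)^(ε:ℝ) := by
      rw [← Real.rpow_natCast (X^(ε:ℝ)) r, ← Real.rpow_mul hX0.le, mul_comm,
        Real.rpow_mul hX0.le, Real.rpow_natCast]
    set NF : ℝ := ((N ! : ℕ):ℝ) with hNFdef
    have hNF0 : 0 < NF := by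
      rw [hNFdef]
      exact_mod_cast Nat.factorial_pos N
    have hNFn : NF ≤ Fn := by
      rw [hNFdef, hFndef]
      exact_mod_cast Nat.factorial_le hn1
    set W : ℝ := (((2*N)^M : ℕ):ℝ) with hWdef
    have hW0 : 0 < W := by
      rw [hWdef]
      exact_mod_cast pow_pos (by omega : 0 < 2*N) M
    have hFnW : Fn ≤ Fb * W := by
      rw [hFndef, hFbdef, hWdef]
      have hnat : n ! ≤ (n-β)! * (2*N)^M := by
        calc n ! = (n-β)! * n.descFactorial β := (Nat.factorial_mul_descFactorial hβn).symm
          _ ≤ (n-β)! * n^β := Nat.mul_le_mul_left _ (Nat.descFactorial_le_pow n β)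
          _ ≤ (n-β)! * (2*N)^M := by
              apply Nat.mul_le_mul_left
              calc n^β ≤ (2*N)^β := Nat.pow_le_pow_left (by omega) β
                _ ≤ (2*N)^M := Nat.pow_le_pow_right (by omega) hβM
      exact_mod_cast hnat
    have hW1 : W^2 ≤ (2*(N:ℝ))^((2:ℝ)*(N:ℝ)^((1:ℝ)/20)) := by
      have hWr : W = (2*(N:ℝ))^(M:ℕ) := by
        rw [hWdef]
        push_cast
        ring
      rw [hWr, ← pow_mul, ← Real.rpow_natCast (2*(N:ℝ)) (M*2)]
      apply Real.rpow_le_rpow_of_exponent_le (by linarith [hNR1])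
      push_cast
      linarith [hMreal]
    have hmain : 2*K*X^2 ≤ X^(ε:ℝ) * Y^2 := by
      apply (pow_le_pow_iff_left₀ (by positivity) (by positivity) (show r ≠ 0 by omega)).mp
      have hL : (2*K*X^2)^r = (2*K)^r * (X^r)^2 := by
        rw [mul_pow, pow_right_comm]
      have hR : (X^(ε:ℝ)*Y^2)^r = (X^r)^(ε:ℝ) * (Y^r)^2 := by
        rw [mul_pow, hXεpow, pow_right_comm]
      rw [hL, hR]
      have hrp : (0:ℝ) < (A0+CC)^(ε:ℝ) := Real.rpow_pos_of_pos hApCC ε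
      calc (2*K)^r * (X^r)^2
          ≤ (2*K)^r * (2*SS*Fn/A0)^2 := by
            apply mul_le_mul_of_nonneg_left _ (by positivity)
            exact pow_le_pow_left₀ (by positivity) hupX 2
        _ ≤ (2*K)^r * (2*SS*(Fb*W)/A0)^2 := by
            apply mul_le_mul_of_nonneg_left _ (by positivity)
            apply pow_le_pow_left₀ (by positivity) _ 2
            gcongr
        _ = ((2*K)^r * (2*SS/A0)^2 * Fb^2) * W^2 := by
            field_simp
        _ ≤ ((2*K)^r * (2*SS/A0)^2 * Fb^2) * ((2*(N:ℝ))^((2:ℝ)*(N:ℝ)^((1:ℝ)/20))) := by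
            apply mul_le_mul_of_nonneg_left hW1 (by positivity)
        _ = (c₂ * ((2*(N:ℝ))^((2:ℝ)*(N:ℝ)^((1:ℝ)/20)))) * (Fb^2 / ((A0+CC)^2 * (A0+CC)^(ε:ℝ))) := by
            rw [hc₂def]
            field_simp
        _ ≤ NF^(ε:ℝ) * (Fb^2 / ((A0+CC)^2 * (A0+CC)^(ε:ℝ))) := by
            apply mul_le_mul_of_nonneg_right hev5 (by positivity)
        _ ≤ (X^r)^(ε:ℝ) * (Y^r)^2 := by
            have e1 : NF^(ε:ℝ) ≤ (A0+CC)^(ε:ℝ) * (X^r)^(ε:ℝ) := by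
              rw [← Real.mul_rpow hApCC.le (by positivity)]
              exact Real.rpow_le_rpow hNF0.le (by linarith [hNFn, hb1']) hε.le
            have e3 : Fb^2 ≤ (A0+CC)^2 * (Y^r)^2 := by
              rw [← mul_pow]
              exact pow_le_pow_left₀ hFb0.le hb2' 2
            have e4 : NF^(ε:ℝ) * (Fb^2 / ((A0+CC)^2 * (A0+CC)^(ε:ℝ)))
                ≤ ((A0+CC)^(ε:ℝ) * (X^r)^(ε:ℝ)) * (((A0+CC)^2 * (Y^r)^2) / ((A0+CC)^2 * (A0+CC)^(ε:ℝ))) := by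
              apply mul_le_mul e1 _ (by positivity) (by positivity)
              exact div_le_div₀ (by positivity) e3 (by positivity) le_rfl
            calc NF^(ε:ℝ) * (Fb^2 / ((A0+CC)^2 * (A0+CC)^(ε:ℝ)))
                ≤ ((A0+CC)^(ε:ℝ) * (X^r)^(ε:ℝ)) * (((A0+CC)^2 * (Y^r)^2) / ((A0+CC)^2 * (A0+CC)^(ε:ℝ))) := e4
              _ = (X^r)^(ε:ℝ) * (Y^r)^2 := by
                  field_simp
    -- put everything together
    have hXe2 : X^(ε-2) = X^(ε:ℝ) / X^2 := by
      rw [Real.rpow_sub hX0, show ((2:ℝ)) = ((2:ℕ):ℝ) by norm_num, Real.rpow_natCast]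
    have hfinal : K * (2/Y^2) ≤ X^(ε-2) := by
      have h7 : (2*K)/Y^2 ≤ X^(ε:ℝ)/X^2 := by
        rw [div_le_div_iff₀ (by positivity) (by positivity)]
        linarith [hmain]
      calc K*(2/Y^2) = (2*K)/Y^2 := by ring
        _ ≤ X^(ε:ℝ)/X^2 := h7
        _ = X^(ε-2) := hXe2.symm
    calc w * |t^((1:ℝ)/r) - 1|
        ≤ 4 * |t - 1| :=
          mul_le_mul hw4 (aux_rpow_abs t ht0 r (by omega)) (abs_nonneg _) (by norm_num)
      _ ≤ 4 * (2*CC/A0 * (1/X^2 + 1/Y^2)) := mul_le_mul_of_nonneg_left htm1 (by norm_num)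
      _ ≤ 4 * (2*CC/A0 * (1/Y^2 + 1/Y^2)) := by
          apply mul_le_mul_of_nonneg_left _ (by norm_num)
          apply mul_le_mul_of_nonneg_left _ (by positivity)
          have hXY2 : Y^2 ≤ X^2 := pow_le_pow_left₀ hY0.le hYX 2
          have : 1/X^2 ≤ 1/Y^2 := one_div_le_one_div_of_le (by positivity) hXY2
          linarith
      _ = K * (2/Y^2) := by
          rw [hKdef]
          ring
      _ ≤ X^(ε-2) := hfinal
  intro β hβ
  rcases hβ with hβ | hβ
  · subst hβ
    exact key β x₁ hd1 hrβ1 (le_of_lt (lt_of_lt_of_le hβ12 hβ2M)) hx1 hPx1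
  · rw [Set.mem_singleton_iff] at hβ
    subst hβ
    exact key β x₂ hd2 (by omega) hβ2M hx2 hPx2
end

section
/- Let r ≥ 2 and k ≥ 0 be integers. Then the rational number r^k · (∏_{p prime, p ∣ r} p^(⌊k/(p−1)⌋)) · C(−1/r, k) is an integer, where C(−1/r, k) := (1/k!)·∏_{i=0}^{k−1} (−1/r − i) ∈ ℚ is the generalized binomial coefficient. -/
/-- The generalized binomial coefficient `C(q, k) = q(q−1)⋯(q−k+1)/k!`. -/
def genBinom (q : ℚ) (k : ℕ) : ℚ :=
  (∏ i ∈ Finset.range k, (q - i)) / (k.factorial : ℚ)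

open Finset

lemma ascFactorial_prod (n k : ℕ) : ∏ i ∈ range k, (n + i) = n.ascFactorial k := by
  induction k with
  | zero => simp
  | succ k ih => rw [Finset.prod_range_succ, ih, Nat.ascFactorial_succ, mul_comm]

/-- If `q` is a prime not dividing `r`, then `q^(v_q(k!))` divides `∏_{i<k}(1+i r)`. -/
lemma key_dvd (r k q : ℕ) (hq : q.Prime) (hqr : ¬ q ∣ r) :
    q ^ ((k.factorial).factorization q) ∣ ∏ i ∈ range k, (1 + i * r) := by
  set e := (k.factorial).factorization q with he
  set M := q ^ e with hMdef
  have hM : M ∣ k.factorial := Nat.ordProj_dvd _ _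
  have hMpos : 0 < M := pow_pos hq.pos _
  haveI : NeZero M := ⟨hMpos.ne'⟩
  have hcop : Nat.Coprime r M :=
    ((hq.coprime_iff_not_dvd.mpr hqr).pow_left e).symm
  set u : (ZMod M)ˣ := ZMod.unitOfCoprime r hcop with hu
  have hur : (u : ZMod M) = (r : ZMod M) := rfl
  set s : ℕ := ((u⁻¹ : (ZMod M)ˣ) : ZMod M).val with hs
  have hsu : ((s : ℕ) : ZMod M) = ((u⁻¹ : (ZMod M)ˣ) : ZMod M) := ZMod.natCast_zmod_val _
  -- the product is 0 mod M
  rw [← ZMod.natCast_eq_zero_iff]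
  push_cast
  have hterm : ∀ i : ℕ, (1 : ZMod M) + (i : ZMod M) * (r : ZMod M)
      = (r : ZMod M) * ((s : ZMod M) + i) := by
    intro i
    rw [hsu, mul_add, ← hur]
    have : (u : ZMod M) * ((u⁻¹ : (ZMod M)ˣ) : ZMod M) = 1 := by
      rw [← Units.val_mul, mul_inv_cancel, Units.val_one]
    rw [this]
    ring
  calc ∏ i ∈ range k, ((1 : ZMod M) + (i : ZMod M) * (r : ZMod M))
      = ∏ i ∈ range k, ((r : ZMod M) * ((s : ZMod M) + i)) := by
        exact Finset.prod_congr rfl fun i _ => hterm i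
    _ = (r : ZMod M) ^ k * ∏ i ∈ range k, ((s : ZMod M) + i) := by
        rw [Finset.prod_mul_distrib, Finset.prod_const, card_range]
    _ = (r : ZMod M) ^ k * ((s.ascFactorial k : ℕ) : ZMod M) := by
        congr 1
        rw [← ascFactorial_prod]
        push_cast
        rfl
    _ = 0 := by
        have : ((s.ascFactorial k : ℕ) : ZMod M) = 0 := by
          rw [ZMod.natCast_eq_zero_iff]
          exact hM.trans (Nat.factorial_dvd_ascFactorial _ _)
        rw [this, mul_zero]

lemma legendre_le (q k : ℕ) (hq : q.Prime) :
    (k.factorial).factorization q ≤ k / (q - 1) := by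
  haveI : Fact q.Prime := ⟨hq⟩
  rw [Nat.factorization_def _ hq]
  have h2 := hq.two_le
  rw [Nat.le_div_iff_mul_le (by omega : 0 < q - 1), mul_comm]
  calc (q - 1) * padicValNat q (k.factorial) = k - (q.digits k).sum :=
        sub_one_mul_padicValNat_factorial k
    _ ≤ k := Nat.sub_le _ _

/-- Main divisibility: `k! ∣ (∏_{p | r} p^(k/(p-1))) * ∏_{i<k}(1+i r)`. -/
lemma main_dvd (r : ℕ) (hr : 2 ≤ r) (k : ℕ) :
    k.factorial ∣ (∏ p ∈ r.primeFactors, p ^ (k / (p - 1)))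
        * ∏ i ∈ range k, (1 + i * r) := by
  set N := ∏ p ∈ r.primeFactors, p ^ (k / (p - 1)) with hN
  set Pk := ∏ i ∈ range k, (1 + i * r) with hP
  have hNpos : 0 < N := Finset.prod_pos fun p hp =>
    pow_pos (Nat.pos_of_mem_primeFactors hp) _
  have hPpos : 0 < Pk := Finset.prod_pos fun i _ => by omega
  rw [← Nat.factorization_le_iff_dvd (Nat.factorial_ne_zero k) (by positivity)]
  intro q
  rcases Nat.eq_zero_or_pos ((k.factorial).factorization q) with h0 | hpos
  · simp [h0]
  have hq : q.Prime := Nat.prime_of_mem_primeFactors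
    ((Nat.support_factorization _) ▸ Finsupp.mem_support_iff.mpr hpos.ne')
  rw [Nat.factorization_mul hNpos.ne' hPpos.ne', Finsupp.add_apply]
  by_cases hqr : q ∣ r
  · -- q ∈ r.primeFactors, so q^(k/(q-1)) ∣ N
    have hmem : q ∈ r.primeFactors := Nat.mem_primeFactors.mpr ⟨hq, hqr, by omega⟩
    have hdvd : q ^ (k / (q - 1)) ∣ N := Finset.dvd_prod_of_mem _ hmem
    have : k / (q - 1) ≤ N.factorization q :=
      (Nat.Prime.pow_dvd_iff_le_factorization hq hNpos.ne').mp hdvd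
    have := legendre_le q k hq
    omega
  · have hdvd := key_dvd r k q hq hqr
    have : (k.factorial).factorization q ≤ Pk.factorization q :=
      (Nat.Prime.pow_dvd_iff_le_factorization hq hPpos.ne').mp hdvd
    omega

/-- **Denominators of binomial coefficients** (Lemma 4.1).
Let `r ≥ 2` and `k ≥ 0` be integers. Then
`r^k · (∏_{p prime, p ∣ r} p^(⌊k/(p−1)⌋)) · C(−1/r, k)` is an integer. -/
theorem denominator_of_binomial_coefficient (r : ℕ) (hr : 2 ≤ r) (k : ℕ) :
    ∃ m : ℤ,
      (r : ℚ) ^ k * (∏ p ∈ r.primeFactors, (p : ℚ) ^ (k / (p - 1)))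
          * genBinom (-1 / r) k = (m : ℚ) := by
  obtain ⟨c, hc⟩ := main_dvd r hr k
  refine ⟨(-1) ^ k * c, ?_⟩
  have hr0 : (r : ℚ) ≠ 0 := by positivity
  have hk0 : (k.factorial : ℚ) ≠ 0 := by positivity
  set N := ∏ p ∈ r.primeFactors, p ^ (k / (p - 1)) with hNdef
  set Pk := ∏ i ∈ Finset.range k, (1 + i * r) with hPdef
  have hNcast : ((N : ℕ) : ℚ) = ∏ p ∈ r.primeFactors, (p : ℚ) ^ (k / (p - 1)) := by
    push_cast [hNdef]; rfl
  have hPcast : ((Pk : ℕ) : ℚ) = ∏ i ∈ range k, (1 + (i : ℚ) * r) := by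
    push_cast [hPdef]; rfl
  have hprod : (r : ℚ) ^ k * ∏ i ∈ range k, (-1 / (r : ℚ) - i)
      = (-1 : ℚ) ^ k * ∏ i ∈ range k, (1 + (i : ℚ) * r) := by
    calc (r : ℚ) ^ k * ∏ i ∈ range k, (-1 / (r : ℚ) - i)
        = ∏ i ∈ range k, ((r : ℚ) * (-1 / (r : ℚ) - i)) := by
          rw [Finset.prod_mul_distrib, Finset.prod_const, card_range]
      _ = ∏ i ∈ range k, ((-1 : ℚ) * (1 + (i : ℚ) * r)) :=
          Finset.prod_congr rfl fun i _ => by field_simp; ring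
      _ = (-1 : ℚ) ^ k * ∏ i ∈ range k, (1 + (i : ℚ) * r) := by
          rw [Finset.prod_mul_distrib, Finset.prod_const, card_range]
  have hcast : (k.factorial : ℚ) * (c : ℚ) = ((N : ℕ) : ℚ) * ((Pk : ℕ) : ℚ) := by
    exact_mod_cast hc.symm
  rw [genBinom, ← hNcast]
  push_cast
  calc (r : ℚ) ^ k * ((N : ℕ) : ℚ) * ((∏ i ∈ range k, (-1 / (r : ℚ) - (i : ℚ))) / (k.factorial : ℚ))
      = ((N : ℕ) : ℚ) * ((r : ℚ) ^ k * ∏ i ∈ range k, (-1 / (r : ℚ) - (i : ℚ))) / (k.factorial : ℚ) := by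
        ring
    _ = ((N : ℕ) : ℚ) * ((-1 : ℚ) ^ k * ((Pk : ℕ) : ℚ)) / (k.factorial : ℚ) := by
        rw [hprod, hPcast]
    _ = (-1 : ℚ) ^ k * (((k.factorial : ℚ) * (c : ℚ)) / (k.factorial : ℚ)) := by
        rw [hcast]; ring
    _ = (-1) ^ k * (c : ℚ) := by
        rw [mul_div_cancel_left₀ _ hk0]
end

section
/- Let M and N be positive integers with M < N, let A ≥ 1 be a real number, and let a_{i,j} (1 ≤ i ≤ M, 1 ≤ j ≤ N) be integers with |a_{i,j}| ≤ A. Then there exist integers X_1, …, X_N, not all zero, such that Σ_{j=1}^{N} a_{i,j}·X_j = 0 for every 1 ≤ i ≤ M, and |X_j| ≤ (3AN)^(M/(N−M)) for every j. -/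
attribute [local instance] Matrix.seminormedAddCommGroup

/-- **Siegel's lemma** (Lemma 4.3).
Let `M < N` be positive integers, `A ≥ 1` a real number, and let `a_{i,j}` be integers with
`|a_{i,j}| ≤ A`. Then there exist integers `X_1, …, X_N`, not all zero, solving the system
`Σ_j a_{i,j} X_j = 0` for all `i`, with `|X_j| ≤ (3AN)^(M/(N−M))`. -/
theorem siegel_lemma (M N : ℕ) (hM : 0 < M) (hMN : M < N)
    (A : ℝ) (hA : 1 ≤ A) (a : Fin M → Fin N → ℤ)
    (ha : ∀ i j, |((a i j : ℤ) : ℝ)| ≤ A) :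
    ∃ X : Fin N → ℤ, X ≠ 0 ∧
      (∀ i, ∑ j, a i j * X j = 0) ∧
      ∀ j, |((X j : ℤ) : ℝ)| ≤ (3 * A * N) ^ ((M : ℝ) / ((N : ℝ) - (M : ℝ))) := by
  have hN : (0 : ℝ) < N := by exact_mod_cast Nat.pos_of_ne_zero (by omega)
  obtain ⟨t, ht0, hts, htb⟩ := Int.Matrix.exists_ne_zero_int_vec_norm_le
    (Matrix.of a) (by simpa using hMN) (by simpa using hM)
  refine ⟨t, ht0, ?_, ?_⟩
  · intro i
    have := congrFun hts i
    simpa [Matrix.mulVec, dotProduct] using this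
  · intro j
    have hAnorm : max 1 ‖Matrix.of a‖ ≤ A := by
      apply max_le hA
      rw [Matrix.norm_le_iff (le_trans zero_le_one hA)]
      intro i j
      simpa [Int.norm_eq_abs] using ha i j
    have h1 : ‖t j‖ ≤ ‖t‖ := norm_le_pi_norm t j
    have h2 : ‖t‖ ≤ ((N : ℝ) * max 1 ‖Matrix.of a‖) ^ ((M : ℝ) / ((N : ℝ) - M)) := by
      simpa using htb
    have hbase : (N : ℝ) * max 1 ‖Matrix.of a‖ ≤ 3 * A * N := by
      calc (N : ℝ) * max 1 ‖Matrix.of a‖ ≤ N * A := by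
            exact mul_le_mul_of_nonneg_left hAnorm (le_of_lt hN)
        _ ≤ 3 * A * N := by nlinarith
    have hexp : (0 : ℝ) ≤ (M : ℝ) / ((N : ℝ) - M) := by
      apply div_nonneg (Nat.cast_nonneg M)
      have : (M : ℝ) < N := by exact_mod_cast hMN
      linarith
    have h3 : ((N : ℝ) * max 1 ‖Matrix.of a‖) ^ ((M : ℝ) / ((N : ℝ) - M))
        ≤ (3 * A * N) ^ ((M : ℝ) / ((N : ℝ) - M)) := by
      apply Real.rpow_le_rpow (by positivity) hbase hexp
    calc |((t j : ℤ) : ℝ)| = ‖t j‖ := by simp [Int.norm_eq_abs]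
      _ ≤ _ := le_trans h1 (le_trans h2 h3)
end

section
/- Let r ≥ 2 and M ≥ 2 be integers and let β_1, β_2 be integers with 2 ≤ β_1 < β_2 ≤ M. Set T(X) := r·∏_{j=1}^{M}(1−jX) ∈ ℤ[X], B_0 := 0, and B_{β_i}(X) := Σ_{j=1}^{β_i−1} j·∏_{1≤j'≤M, j'≠j}(1−j'X) ∈ ℤ[X] for i = 1, 2. Let D ≥ 0 and let P_0, P_1, P_2 ∈ ℤ[X] have degree ≤ D. Define P_i^{[0]} := P_i and P_i^{[k+1]} := T·(P_i^{[k]})′ + B_{β_i}·P_i^{[k]} (with B_{β_0} meaning B_0 = 0), and define R^{[k]} ∈ ℚ[[X]] by R^{[0]} := P_0 + P_1·ω_{r,β_1} + P_2·ω_{r,β_2} and R^{[k+1]} := T·(d/dX)R^{[k]}, where d/dX is the formal derivative on ℚ[[X]]. Then for every k ≥ 0: (1) each P_i^{[k]} has integer coefficients; (2) deg(P_i^{[k]}) ≤ D + k·M; (3) R^{[k]} = P_0^{[k]} + P_1^{[k]}·ω_{r,β_1} + P_2^{[k]}·ω_{r,β_2} in ℚ[[X]]. -/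
/-- The formal power series `ω_{r,β} ∈ ℚ[[X]]`, the Taylor expansion at `0` of
`∏_{j=1}^{β−1} (1−jx)^(−1/r)`. -/
noncomputable def omegaPS (r β : ℕ) : PowerSeries ℚ :=
  ∏ j ∈ Finset.Icc 1 (β - 1),
    PowerSeries.mk (fun k => (-1) ^ k * genBinom (-1 / r) k * (j : ℚ) ^ k)

/-- `T(X) = r·∏_{j=1}^{M} (1−jX) ∈ ℤ[X]`. -/
noncomputable def Tpoly (r M : ℕ) : Polynomial ℤ :=
  Polynomial.C (r : ℤ) * ∏ j ∈ Finset.Icc 1 M, (1 - Polynomial.C (j : ℤ) * Polynomial.X)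

/-- `B_β(X) = Σ_{j=1}^{β−1} j·∏_{1≤j'≤M, j'≠j} (1−j'X) ∈ ℤ[X]` (equal to `T·A_β`). -/
noncomputable def Bpoly (M β : ℕ) : Polynomial ℤ :=
  ∑ j ∈ Finset.Icc 1 (β - 1),
    Polynomial.C (j : ℤ) *
      ∏ j' ∈ (Finset.Icc 1 M).erase j, (1 - Polynomial.C (j' : ℤ) * Polynomial.X)

/-- The polynomials `P^{[k]}`, defined by `P^{[0]} = P`, `P^{[k+1]} = T·(P^{[k]})′ + B·P^{[k]}`. -/
noncomputable def Pbr (T B P : Polynomial ℤ) : ℕ → Polynomial ℤ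
  | 0 => P
  | k + 1 => T * Polynomial.derivative (Pbr T B P k) + B * Pbr T B P k

/-- The coercion of an integer polynomial into `ℚ[[X]]`. -/
noncomputable def intPolyToPS (p : Polynomial ℤ) : PowerSeries ℚ :=
  ((p.map (Int.castRingHom ℚ) : Polynomial ℚ) : PowerSeries ℚ)

/-- The power series `R^{[k]}`, with `R^{[0]} = R0` and `R^{[k+1]} = T·(d/dX)R^{[k]}`. -/
noncomputable def Rbr (r M : ℕ) (R0 : PowerSeries ℚ) : ℕ → PowerSeries ℚ
  | 0 => R0
  | k + 1 => intPolyToPS (Tpoly r M) * PowerSeries.derivativeFun (Rbr r M R0 k)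

section Aux

open Polynomial PowerSeries Finset

noncomputable def fPS (r j : ℕ) : PowerSeries ℚ :=
  PowerSeries.mk (fun k => (-1) ^ k * genBinom (-1 / r) k * (j : ℚ) ^ k)

lemma coeff_derivativeFun' (f : PowerSeries ℚ) (n : ℕ) :
    PowerSeries.coeff n f.derivativeFun = PowerSeries.coeff (n + 1) f * (n + 1) :=
  PowerSeries.coeff_derivative f n

lemma genBinom_succ (q : ℚ) (n : ℕ) :
    genBinom q (n + 1) = genBinom q n * (q - n) / (n + 1) := by
  simp only [genBinom, Finset.prod_range_succ, Nat.factorial_succ]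
  push_cast
  rw [div_mul_eq_mul_div, div_div, mul_comm ((n:ℚ)+1)]

lemma coeff_X_mul_deriv (f : PowerSeries ℚ) (n : ℕ) :
    PowerSeries.coeff n (PowerSeries.X * f.derivativeFun) = n * PowerSeries.coeff n f := by
  cases n with
  | zero => simp
  | succ m => rw [coeff_succ_X_mul, coeff_derivativeFun']; push_cast; ring

lemma key_fPS (r j : ℕ) (hr : r ≠ 0) :
    (1 - PowerSeries.C (j : ℚ) * PowerSeries.X) * (fPS r j).derivativeFun
      = PowerSeries.C ((j : ℚ) / r) * fPS r j := by
  have hrq : (r : ℚ) ≠ 0 := Nat.cast_ne_zero.mpr hr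
  ext n
  rw [sub_mul, one_mul, map_sub, mul_assoc, PowerSeries.coeff_C_mul,
    coeff_X_mul_deriv, coeff_derivativeFun', PowerSeries.coeff_C_mul]
  simp only [fPS, coeff_mk]
  rw [genBinom_succ]
  have hn1 : ((n:ℚ) + 1) ≠ 0 := by positivity
  field_simp
  ring

/-- `intPolyToPS` as a ring hom. -/
noncomputable def toPS : Polynomial ℤ →+* PowerSeries ℚ :=
  (Polynomial.coeToPowerSeries.ringHom).comp (Polynomial.mapRingHom (Int.castRingHom ℚ))

lemma intPolyToPS_eq (p : Polynomial ℤ) : intPolyToPS p = toPS p := rfl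

@[simp] lemma toPS_C (n : ℤ) : toPS (Polynomial.C n) = PowerSeries.C (n : ℚ) := by
  simp [toPS, Polynomial.coeToPowerSeries.ringHom]

@[simp] lemma toPS_X : toPS Polynomial.X = PowerSeries.X := by
  show ((Polynomial.X.map (Int.castRingHom ℚ) : Polynomial ℚ) : PowerSeries ℚ) = _
  rw [Polynomial.map_X, Polynomial.coe_X]

lemma toPS_T (r M : ℕ) :
    toPS (Tpoly r M) = PowerSeries.C (r : ℚ) *
      ∏ j ∈ Finset.Icc 1 M, (1 - PowerSeries.C (j : ℚ) * PowerSeries.X) := by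
  simp [Tpoly, map_mul, map_prod, map_sub, map_one]

lemma toPS_B (M β : ℕ) :
    toPS (Bpoly M β) = ∑ j ∈ Finset.Icc 1 (β - 1), PowerSeries.C (j : ℚ) *
      ∏ j' ∈ (Finset.Icc 1 M).erase j, (1 - PowerSeries.C (j' : ℚ) * PowerSeries.X) := by
  simp [Bpoly, map_sum, map_mul, map_prod, map_sub, map_one]

lemma T_deriv_prod (r M : ℕ) (hr : r ≠ 0) (S : Finset ℕ) (hS : S ⊆ Finset.Icc 1 M) :
    toPS (Tpoly r M) * (∏ j ∈ S, fPS r j).derivativeFun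
      = (∑ j ∈ S, PowerSeries.C (j : ℚ) *
          ∏ j' ∈ (Finset.Icc 1 M).erase j, (1 - PowerSeries.C (j' : ℚ) * PowerSeries.X))
        * ∏ j ∈ S, fPS r j := by
  classical
  induction S using Finset.induction_on with
  | empty => simp [PowerSeries.derivativeFun_one]
  | @insert a S ha ih =>
    have haM : a ∈ Finset.Icc 1 M := hS (Finset.mem_insert_self a S)
    have hS' : S ⊆ Finset.Icc 1 M := fun x hx => hS (Finset.mem_insert_of_mem hx)
    rw [Finset.prod_insert ha, PowerSeries.derivativeFun_mul, Finset.sum_insert ha]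
    have hsplit : (∏ j ∈ Finset.Icc 1 M, (1 - PowerSeries.C (j : ℚ) * PowerSeries.X))
        = (1 - PowerSeries.C (a : ℚ) * PowerSeries.X) *
          ∏ j' ∈ (Finset.Icc 1 M).erase a, (1 - PowerSeries.C (j' : ℚ) * PowerSeries.X) :=
      (Finset.mul_prod_erase _ _ haM).symm
    have hTa : toPS (Tpoly r M) * (fPS r a).derivativeFun
        = PowerSeries.C (a : ℚ) *
          (∏ j' ∈ (Finset.Icc 1 M).erase a, (1 - PowerSeries.C (j' : ℚ) * PowerSeries.X))
          * fPS r a := by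
      rw [toPS_T, hsplit]
      have := key_fPS r a hr
      have hrq : (r : ℚ) ≠ 0 := Nat.cast_ne_zero.mpr hr
      calc PowerSeries.C (r : ℚ) *
            ((1 - PowerSeries.C (a : ℚ) * PowerSeries.X) *
              ∏ j' ∈ (Finset.Icc 1 M).erase a, (1 - PowerSeries.C (j' : ℚ) * PowerSeries.X))
            * (fPS r a).derivativeFun
          = PowerSeries.C (r : ℚ) *
            (∏ j' ∈ (Finset.Icc 1 M).erase a, (1 - PowerSeries.C (j' : ℚ) * PowerSeries.X))
            * ((1 - PowerSeries.C (a : ℚ) * PowerSeries.X) * (fPS r a).derivativeFun) := by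
            ring
        _ = PowerSeries.C (r : ℚ) *
            (∏ j' ∈ (Finset.Icc 1 M).erase a, (1 - PowerSeries.C (j' : ℚ) * PowerSeries.X))
            * (PowerSeries.C ((a : ℚ) / r) * fPS r a) := by rw [this]
        _ = (PowerSeries.C (r : ℚ) * PowerSeries.C ((a : ℚ) / r)) *
            (∏ j' ∈ (Finset.Icc 1 M).erase a, (1 - PowerSeries.C (j' : ℚ) * PowerSeries.X))
            * fPS r a := by ring
        _ = _ := by rw [← map_mul, mul_div_cancel₀ _ hrq]
    calc toPS (Tpoly r M) *
          (fPS r a • (∏ j ∈ S, fPS r j).derivativeFun + (∏ j ∈ S, fPS r j) • (fPS r a).derivativeFun)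
        = fPS r a * (toPS (Tpoly r M) * (∏ j ∈ S, fPS r j).derivativeFun)
          + (∏ j ∈ S, fPS r j) * (toPS (Tpoly r M) * (fPS r a).derivativeFun) := by
          simp only [smul_eq_mul]; ring
      _ = fPS r a * ((∑ j ∈ S, PowerSeries.C (j : ℚ) *
            ∏ j' ∈ (Finset.Icc 1 M).erase j, (1 - PowerSeries.C (j' : ℚ) * PowerSeries.X))
            * ∏ j ∈ S, fPS r j)
          + (∏ j ∈ S, fPS r j) * (PowerSeries.C (a : ℚ) *
            (∏ j' ∈ (Finset.Icc 1 M).erase a, (1 - PowerSeries.C (j' : ℚ) * PowerSeries.X))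
            * fPS r a) := by rw [ih hS', hTa]
      _ = _ := by ring

lemma omegaPS_eq_prod (r β : ℕ) : omegaPS r β = ∏ j ∈ Finset.Icc 1 (β - 1), fPS r j := rfl

lemma T_mul_deriv_omega (r M β : ℕ) (hr : r ≠ 0) (hβ : β ≤ M) :
    intPolyToPS (Tpoly r M) * (omegaPS r β).derivativeFun
      = intPolyToPS (Bpoly M β) * omegaPS r β := by
  rw [intPolyToPS_eq, intPolyToPS_eq, omegaPS_eq_prod, toPS_B]
  exact T_deriv_prod r M hr _ (fun x hx => by
    rw [Finset.mem_Icc] at hx ⊢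
    exact ⟨hx.1, hx.2.trans ((Nat.sub_le β 1).trans hβ)⟩)

lemma deriv_intPolyToPS (p : Polynomial ℤ) :
    (intPolyToPS p).derivativeFun = intPolyToPS (Polynomial.derivative p) := by
  rw [intPolyToPS]
  exact (PowerSeries.derivative_coe _).trans (by rw [intPolyToPS, ← Polynomial.derivative_map])

/-- Key step: if `T·ω' = B·ω` then `T·(P·ω)' = (T·P' + B·P)·ω`. -/
lemma step_lemma (T B P : Polynomial ℤ) (ω : PowerSeries ℚ)
    (h : intPolyToPS T * ω.derivativeFun = intPolyToPS B * ω) :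
    intPolyToPS T * (intPolyToPS P * ω).derivativeFun
      = intPolyToPS (T * Polynomial.derivative P + B * P) * ω := by
  rw [PowerSeries.derivativeFun_mul]
  have hm : ∀ p q : Polynomial ℤ, intPolyToPS (p * q) = intPolyToPS p * intPolyToPS q := by
    intro p q; simp [intPolyToPS_eq, map_mul]
  have ha : ∀ p q : Polynomial ℤ, intPolyToPS (p + q) = intPolyToPS p + intPolyToPS q := by
    intro p q; simp [intPolyToPS_eq, map_add]
  rw [ha, hm, hm]
  calc intPolyToPS T * (intPolyToPS P • ω.derivativeFun + ω • (intPolyToPS P).derivativeFun)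
      = intPolyToPS P * (intPolyToPS T * ω.derivativeFun)
        + intPolyToPS T * (intPolyToPS P).derivativeFun * ω := by
        simp only [smul_eq_mul]; ring
    _ = intPolyToPS P * (intPolyToPS B * ω)
        + intPolyToPS T * intPolyToPS (Polynomial.derivative P) * ω := by
        rw [h, deriv_intPolyToPS]
    _ = _ := by ring

lemma natDegree_one_sub (j : ℕ) :
    (1 - Polynomial.C (j : ℤ) * Polynomial.X).natDegree ≤ 1 := by
  apply (Polynomial.natDegree_sub_le _ _).trans
  rw [Polynomial.natDegree_one]
  exact max_le (Nat.zero_le 1)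
    ((Polynomial.natDegree_C_mul_le _ _).trans Polynomial.natDegree_X_le)

lemma natDegree_prod_one_sub (s : Finset ℕ) :
    (∏ j ∈ s, (1 - Polynomial.C (j : ℤ) * Polynomial.X)).natDegree ≤ s.card := by
  apply (Polynomial.natDegree_prod_le _ _).trans
  have := Finset.sum_le_card_nsmul s
    (fun j => (1 - Polynomial.C (j : ℤ) * Polynomial.X).natDegree) 1
    (fun j _ => natDegree_one_sub j)
  simpa using this

lemma natDegree_T_le (r M : ℕ) : (Tpoly r M).natDegree ≤ M := by
  apply (Polynomial.natDegree_mul_le).trans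
  rw [Polynomial.natDegree_C, zero_add]
  exact (natDegree_prod_one_sub _).trans (by simp)

lemma natDegree_B_le (M β : ℕ) : (Bpoly M β).natDegree ≤ M := by
  apply Polynomial.natDegree_sum_le_of_forall_le
  intro j _
  apply (Polynomial.natDegree_mul_le).trans
  rw [Polynomial.natDegree_C, zero_add]
  refine (natDegree_prod_one_sub _).trans ?_
  calc ((Finset.Icc 1 M).erase j).card ≤ (Finset.Icc 1 M).card :=
        Finset.card_le_card (Finset.erase_subset _ _)
    _ = M := by simp

lemma natDegree_Pbr_le (r M : ℕ) (B P : Polynomial ℤ) (hB : B.natDegree ≤ M)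
    (D : ℕ) (hP : P.natDegree ≤ D) (k : ℕ) :
    (Pbr (Tpoly r M) B P k).natDegree ≤ D + k * M := by
  induction k with
  | zero => simpa [Pbr] using hP
  | succ k ih =>
    show (Tpoly r M * Polynomial.derivative (Pbr (Tpoly r M) B P k)
        + B * Pbr (Tpoly r M) B P k).natDegree ≤ D + (k + 1) * M
    apply (Polynomial.natDegree_add_le _ _).trans
    apply max_le
    · apply (Polynomial.natDegree_mul_le).trans
      have := (Polynomial.natDegree_derivative_le (Pbr (Tpoly r M) B P k)).trans
        ((Nat.sub_le _ 1).trans ih)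
      calc (Tpoly r M).natDegree + (Polynomial.derivative (Pbr (Tpoly r M) B P k)).natDegree
          ≤ M + (D + k * M) := add_le_add (natDegree_T_le r M) this
        _ = D + (k + 1) * M := by ring
    · apply (Polynomial.natDegree_mul_le).trans
      calc B.natDegree + (Pbr (Tpoly r M) B P k).natDegree
          ≤ M + (D + k * M) := add_le_add hB ih
        _ = D + (k + 1) * M := by ring

end Aux

/-- **Properties of `P_i^{[k]}` and `R^{[k]}`** (Lemma 5.2).
(1) each `P_i^{[k]}` has integer coefficients; (2) `deg(P_i^{[k]}) ≤ D + kM`;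
(3) `R^{[k]} = P₀^{[k]} + P₁^{[k]}·ω_{r,β₁} + P₂^{[k]}·ω_{r,β₂}` in `ℚ[[X]]`. -/
theorem properties_of_bracket_pade (r M : ℕ) (hr : 2 ≤ r) (hM : 2 ≤ M)
    (β₁ β₂ : ℕ) (hβ₁ : 2 ≤ β₁) (hβ₁₂ : β₁ < β₂) (hβ₂ : β₂ ≤ M)
    (D : ℕ) (P₀ P₁ P₂ : Polynomial ℤ)
    (h₀ : P₀.natDegree ≤ D) (h₁ : P₁.natDegree ≤ D) (h₂ : P₂.natDegree ≤ D)
    (k : ℕ) :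
    (∀ Q ∈ [Pbr (Tpoly r M) 0 P₀ k, Pbr (Tpoly r M) (Bpoly M β₁) P₁ k,
        Pbr (Tpoly r M) (Bpoly M β₂) P₂ k],
      (∀ n : ℕ, ∃ m : ℤ, Q.coeff n = m) ∧ Q.natDegree ≤ D + k * M) ∧
    Rbr r M (intPolyToPS P₀ + intPolyToPS P₁ * omegaPS r β₁
        + intPolyToPS P₂ * omegaPS r β₂) k
      = intPolyToPS (Pbr (Tpoly r M) 0 P₀ k)
        + intPolyToPS (Pbr (Tpoly r M) (Bpoly M β₁) P₁ k) * omegaPS r β₁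
        + intPolyToPS (Pbr (Tpoly r M) (Bpoly M β₂) P₂ k) * omegaPS r β₂ := by
  have hr0 : r ≠ 0 := by omega
  constructor
  · intro Q hQ
    refine ⟨fun n => ⟨Q.coeff n, rfl⟩, ?_⟩
    simp only [List.mem_cons, List.not_mem_nil, or_false] at hQ
    rcases hQ with rfl | rfl | rfl
    · exact natDegree_Pbr_le r M 0 P₀ (by simp) D h₀ k
    · exact natDegree_Pbr_le r M _ P₁ (natDegree_B_le M β₁) D h₁ k
    · exact natDegree_Pbr_le r M _ P₂ (natDegree_B_le M β₂) D h₂ k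
  · induction k with
    | zero => rfl
    | succ k ih =>
      have hω1 := T_mul_deriv_omega r M β₁ hr0 (le_of_lt (lt_of_lt_of_le hβ₁₂ hβ₂))
      have hω2 := T_mul_deriv_omega r M β₂ hr0 hβ₂
      show intPolyToPS (Tpoly r M) * (Rbr r M _ k).derivativeFun = _
      rw [ih, PowerSeries.derivativeFun_add, PowerSeries.derivativeFun_add,
        mul_add, mul_add]
      have h0 : intPolyToPS (Tpoly r M) *
            (intPolyToPS (Pbr (Tpoly r M) 0 P₀ k)).derivativeFun
          = intPolyToPS (Pbr (Tpoly r M) 0 P₀ (k+1)) := by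
        show _ = intPolyToPS (Tpoly r M * Polynomial.derivative (Pbr (Tpoly r M) 0 P₀ k)
          + 0 * Pbr (Tpoly r M) 0 P₀ k)
        rw [zero_mul, add_zero, deriv_intPolyToPS]
        simp [intPolyToPS_eq, map_mul]
      have hs1 := step_lemma (Tpoly r M) (Bpoly M β₁) (Pbr (Tpoly r M) (Bpoly M β₁) P₁ k)
        (omegaPS r β₁) hω1
      have hs2 := step_lemma (Tpoly r M) (Bpoly M β₂) (Pbr (Tpoly r M) (Bpoly M β₂) P₂ k)
        (omegaPS r β₂) hω2
      rw [h0, hs1, hs2]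
      rfl
end

section
/- Let r ≥ 2 and M ≥ 2 be integers and let β_1, β_2 be integers with 2 ≤ β_1 < β_2 ≤ M. Set T(X) := r·∏_{j=1}^{M}(1−jX) ∈ ℤ[X], B_0 := 0, and B_{β_i}(X) := Σ_{j=1}^{β_i−1} j·∏_{1≤j'≤M, j'≠j}(1−j'X) ∈ ℤ[X] for i = 1, 2. Suppose P_0, P_1, P_2 ∈ ℤ[X] are all nonzero polynomials, and define P_0^{[k]}, P_1^{[k]}, P_2^{[k]} by P_i^{[0]} := P_i and P_i^{[k+1]} := T·(P_i^{[k]})′ + B_{β_i}·P_i^{[k]} (with B_{β_0} meaning B_0 = 0). Then the determinant Δ of the 3×3 polynomial matrix whose (k,i) entry is P_i^{[k]} for 0 ≤ k, i ≤ 2 is not the zero polynomial. -/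
open Polynomial PowerSeries Finset
open scoped Classical

noncomputable section

namespace DetAux

local notation "DD" => PowerSeries.derivative ℚ

lemma Dmul (a b : ℚ⟦X⟧) : DD (a * b) = a * DD b + b * DD a := by
  rw [Derivation.leibniz]; simp [smul_eq_mul]

lemma exists_coeff_ne_zero {f : ℚ⟦X⟧} (hf : f ≠ 0) : ∃ n, PowerSeries.coeff n f ≠ 0 := by
  by_contra h
  push_neg at h
  exact hf (PowerSeries.ext fun n => by simp [h n])

/-- coefficient of `a * DD b` at `n` where `n+1 = m+p`, when `a` has order ≥ m, `b` order ≥ p. -/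
lemma coeff_mul_derivative (a b : ℚ⟦X⟧) (m p n : ℕ)
    (ha : ∀ k < m, PowerSeries.coeff k a = 0)
    (hb : ∀ k < p, PowerSeries.coeff k b = 0)
    (hn : n + 1 = m + p) :
    PowerSeries.coeff n (a * DD b)
      = (p : ℚ) * (PowerSeries.coeff m a * PowerSeries.coeff p b) := by
  rw [PowerSeries.coeff_mul]
  rcases Nat.eq_zero_or_pos p with hp | hp
  · subst hp
    rw [Finset.sum_eq_zero, Nat.cast_zero, zero_mul]
    rintro ⟨i, j⟩ hij
    rw [Finset.HasAntidiagonal.mem_antidiagonal] at hij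
    have hi : i < m := by omega
    simp [ha i hi]
  · obtain ⟨q, rfl⟩ : ∃ q, p = q + 1 := ⟨p - 1, by omega⟩
    rw [Finset.sum_eq_single (m, q)]
    · rw [PowerSeries.coeff_derivative]
      push_cast; ring
    · rintro ⟨i, j⟩ hij hne
      rw [Finset.HasAntidiagonal.mem_antidiagonal] at hij
      rcases lt_or_ge i m with hi | hi
      · simp [ha i hi]
      · have hj : j + 1 < q + 1 := by
          rcases Nat.lt_or_ge j q with h | h
          · omega
          · exfalso; apply hne
            have : i = m := by omega
            subst this
            have : j = q := by omega
            simp [this]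
        rw [PowerSeries.coeff_derivative, hb (j+1) hj]
        simp
    · intro hmem
      exfalso
      apply hmem
      rw [Finset.HasAntidiagonal.mem_antidiagonal]
      omega

lemma order_eq_of_wronskian {u w : ℚ⟦X⟧} {m p : ℕ}
    (hum : PowerSeries.coeff m u ≠ 0) (hu : ∀ k < m, PowerSeries.coeff k u = 0)
    (hwp : PowerSeries.coeff p w ≠ 0) (hw : ∀ k < p, PowerSeries.coeff k w = 0)
    (h : u * DD w = DD u * w) : p = m := by
  rcases Nat.eq_zero_or_pos (m + p) with hmp | hmp
  · omega
  · have h1 := coeff_mul_derivative u w m p (m + p - 1) hu hw (by omega)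
    have h2 := coeff_mul_derivative w u p m (m + p - 1) hw hu (by omega)
    rw [h, mul_comm (DD u) w] at h1
    rw [h2] at h1
    have : (m : ℚ) = (p : ℚ) := by
      have hne : PowerSeries.coeff m u * PowerSeries.coeff p w ≠ 0 := mul_ne_zero hum hwp
      rw [mul_comm (PowerSeries.coeff p w) (PowerSeries.coeff m u)] at h1
      exact mul_right_cancel₀ hne h1
    exact_mod_cast this.symm

/-- Two-function Wronskian lemma in `ℚ⟦X⟧`. -/
lemma wronskian2 {u v : ℚ⟦X⟧} (hu : u ≠ 0) (h : u * DD v = DD u * v) :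
    ∃ c : ℚ, v = PowerSeries.C c * u := by
  rcases eq_or_ne v 0 with hv | hv
  · exact ⟨0, by simp [hv]⟩
  have hexu : ∃ n, PowerSeries.coeff n u ≠ 0 := exists_coeff_ne_zero hu
  have hexv : ∃ n, PowerSeries.coeff n v ≠ 0 := exists_coeff_ne_zero hv
  set m := Nat.find hexu with hm
  have hum : PowerSeries.coeff m u ≠ 0 := Nat.find_spec hexu
  have hu' : ∀ k < m, PowerSeries.coeff k u = 0 := fun k hk => by
    have := Nat.find_min hexu hk; push_neg at this; exact this
  set p := Nat.find hexv with hp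
  have hvp : PowerSeries.coeff p v ≠ 0 := Nat.find_spec hexv
  have hv' : ∀ k < p, PowerSeries.coeff k v = 0 := fun k hk => by
    have := Nat.find_min hexv hk; push_neg at this; exact this
  have hpm : p = m := order_eq_of_wronskian hum hu' hvp hv' h
  rw [← hpm] at hum hu' 
  set c : ℚ := PowerSeries.coeff p v / PowerSeries.coeff p u with hc
  refine ⟨c, ?_⟩
  set w : ℚ⟦X⟧ := v - PowerSeries.C c * u with hwdef
  have hDw : DD w = DD v - PowerSeries.C c * DD u := by
    rw [hwdef, map_sub, Dmul]
    simp
  have hrel : u * DD w = DD u * w := by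
    rw [hDw, hwdef]; linear_combination h
  by_contra hne
  have hw0 : w ≠ 0 := fun h0 => hne (by rw [← sub_eq_zero]; exact h0)
  have hexw : ∃ n, PowerSeries.coeff n w ≠ 0 := exists_coeff_ne_zero hw0
  set q := Nat.find hexw with hq
  have hwq : PowerSeries.coeff q w ≠ 0 := Nat.find_spec hexw
  have hw' : ∀ k < q, PowerSeries.coeff k w = 0 := fun k hk => by
    have := Nat.find_min hexw hk; push_neg at this; exact this
  have hqp : q = p := order_eq_of_wronskian hum hu' hwq hw' hrel
  apply hwq
  rw [hqp, hwdef, map_sub, PowerSeries.coeff_C_mul, hc]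
  field_simp
  ring

/-- Three-function Wronskian lemma in `ℚ⟦X⟧`: vanishing Wronskian implies
`ℚ`-linear dependence. -/
lemma wronskian3 {f g h : ℚ⟦X⟧}
    (hW : f * DD g * DD (DD h) - f * DD (DD g) * DD h - DD f * g * DD (DD h)
        + DD (DD f) * g * DD h + DD f * DD (DD g) * h - DD (DD f) * DD g * h = 0) :
    ∃ a b c : ℚ, ¬(a = 0 ∧ b = 0 ∧ c = 0) ∧
      PowerSeries.C a * f + PowerSeries.C b * g + PowerSeries.C c * h = 0 := by
  rcases eq_or_ne f 0 with hf | hf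
  · exact ⟨1, 0, 0, by simp, by simp [hf]⟩
  set u : ℚ⟦X⟧ := f * DD g - DD f * g with hu
  set v : ℚ⟦X⟧ := f * DD h - DD f * h with hv
  have hDu : DD u = f * DD (DD g) - DD (DD f) * g := by
    rw [hu, map_sub, Dmul, Dmul]; ring
  have hDv : DD v = f * DD (DD h) - DD (DD f) * h := by
    rw [hv, map_sub, Dmul, Dmul]; ring
  have huv : u * DD v = DD u * v := by
    rw [hDu, hDv, hu, hv]
    linear_combination f * hW
  rcases eq_or_ne u 0 with hu0 | hu0
  · -- f * DD g = DD f * g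
    have : f * DD g = DD f * g := by
      have := sub_eq_zero.mp (hu ▸ hu0 : f * DD g - DD f * g = 0)
      exact this
    obtain ⟨c, hc⟩ := wronskian2 hf this
    exact ⟨c, -1, 0, by simp, by rw [hc, map_neg, map_one, map_zero]; ring⟩
  · obtain ⟨c, hc⟩ := wronskian2 hu0 huv
    have hfg : f * DD (h - PowerSeries.C c * g) = DD f * (h - PowerSeries.C c * g) := by
      have hD : DD (h - PowerSeries.C c * g) = DD h - PowerSeries.C c * DD g := by
        rw [map_sub, Dmul]; simp
      rw [hD]
      have : v - PowerSeries.C c * u = 0 := by rw [hc]; ring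
      rw [hu, hv] at this
      linear_combination this
    obtain ⟨c', hc'⟩ := wronskian2 hf hfg
    refine ⟨-c', -c, 1, by simp, ?_⟩
    rw [sub_eq_iff_eq_add] at hc'
    rw [hc', map_neg, map_neg, map_one]; ring

/-! ### Solutions of `ω' = A·ω` -/

/-- Coefficients of the solution of `ω' = A·ω`, `ω(0) = 1`. -/
noncomputable def odeCoeff (A : ℚ⟦X⟧) : ℕ → ℚ
  | 0 => 1
  | n + 1 => (∑ k ∈ Finset.range (n + 1),
      PowerSeries.coeff k A * odeCoeff A (n - k)) / (n + 1)
  decreasing_by omega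

/-- The solution of `ω' = A·ω`, `ω(0) = 1`. -/
noncomputable def odeSol (A : ℚ⟦X⟧) : ℚ⟦X⟧ := PowerSeries.mk (odeCoeff A)

lemma constantCoeff_odeSol (A : ℚ⟦X⟧) : PowerSeries.constantCoeff (odeSol A) = 1 := by
  rw [← PowerSeries.coeff_zero_eq_constantCoeff_apply, odeSol, PowerSeries.coeff_mk, odeCoeff]

lemma deriv_odeSol (A : ℚ⟦X⟧) : DD (odeSol A) = A * odeSol A := by
  ext n
  rw [PowerSeries.coeff_derivative, odeSol, PowerSeries.coeff_mk, odeCoeff,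
    PowerSeries.coeff_mul, Finset.Nat.sum_antidiagonal_eq_sum_range_succ_mk]
  have hn : ((n : ℚ) + 1) ≠ 0 := by positivity
  rw [div_mul_cancel₀ _ hn]
  refine Finset.sum_congr rfl fun k hk => ?_
  rw [PowerSeries.coeff_mk]

/-! ### The basic polynomials over `ℚ` -/

/-- `U j = 1 - j·X ∈ ℚ[X]`. -/
noncomputable def U (j : ℕ) : ℚ[X] := 1 - Polynomial.C (j : ℚ) * Polynomial.X

/-- `T` over `ℚ`. -/
noncomputable def TQ (r M : ℕ) : ℚ[X] := Polynomial.C (r : ℚ) * ∏ j ∈ Finset.Icc 1 M, U j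

/-- `B_β` over `ℚ`. -/
noncomputable def BQ (M β : ℕ) : ℚ[X] :=
  ∑ j ∈ Finset.Icc 1 (β - 1), Polynomial.C (j : ℚ) * ∏ j' ∈ (Finset.Icc 1 M).erase j, U j'

/-- `p_β = ∏_{j=1}^{β-1} (1 - jX)` over `ℚ`. -/
noncomputable def pQ (β : ℕ) : ℚ[X] := ∏ j ∈ Finset.Icc 1 (β - 1), U j

local notation "φ" => (Polynomial.coeToPowerSeries.ringHom : ℚ[X] →+* ℚ⟦X⟧)

lemma phi_deriv (q : ℚ[X]) : DD (φ q) = φ (Polynomial.derivative q) := by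
  rw [Polynomial.coeToPowerSeries.ringHom_apply, Polynomial.coeToPowerSeries.ringHom_apply]
  exact PowerSeries.derivative_coe q

lemma phi_inj : Function.Injective (φ) := by
  intro p q h
  ext n
  have := congrArg (PowerSeries.coeff n) h
  rwa [Polynomial.coeToPowerSeries.ringHom_apply, Polynomial.coeToPowerSeries.ringHom_apply,
    Polynomial.coeff_coe, Polynomial.coeff_coe] at this

lemma U_ne_zero {j : ℕ} (hj : 1 ≤ j) : U j ≠ 0 := by
  intro h
  have := congrArg (fun p => Polynomial.coeff p 1) h
  have hQ : (j : ℚ) = 0 := by simpa [U, Polynomial.coeff_one] using this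
  have : j = 0 := Nat.cast_eq_zero.mp hQ
  omega

lemma constantCoeff_phi (q : ℚ[X]) :
    PowerSeries.constantCoeff (φ q) = q.coeff 0 := by
  rw [← PowerSeries.coeff_zero_eq_constantCoeff_apply,
    Polynomial.coeToPowerSeries.ringHom_apply, Polynomial.coeff_coe]

lemma constantCoeff_phi_U (j : ℕ) : PowerSeries.constantCoeff (φ (U j)) = 1 := by
  rw [constantCoeff_phi]
  simp [U]

lemma U_mul_inv (j : ℕ) : φ (U j) * (φ (U j))⁻¹ = 1 :=
  PowerSeries.mul_inv_cancel _ (by rw [constantCoeff_phi_U]; norm_num)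

/-! ### Root multiplicities -/

lemma rm_pow (x : ℚ) (p : ℚ[X]) (hp : p ≠ 0) (n : ℕ) :
    Polynomial.rootMultiplicity x (p ^ n) = n * Polynomial.rootMultiplicity x p := by
  induction n with
  | zero => rw [pow_zero, Nat.zero_mul, ← Polynomial.C_1, Polynomial.rootMultiplicity_C]
  | succ n ih =>
      rw [pow_succ, Polynomial.rootMultiplicity_mul (mul_ne_zero (pow_ne_zero n hp) hp), ih]
      ring

lemma rm_prod (x : ℚ) (S : Finset ℕ) (f : ℕ → ℚ[X]) (hf : ∀ j ∈ S, f j ≠ 0) :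
    Polynomial.rootMultiplicity x (∏ j ∈ S, f j)
      = ∑ j ∈ S, Polynomial.rootMultiplicity x (f j) := by
  induction S using Finset.cons_induction with
  | empty => rw [Finset.prod_empty, Finset.sum_empty, ← Polynomial.C_1, Polynomial.rootMultiplicity_C]
  | cons a S ha ih =>
      rw [Finset.prod_cons, Finset.sum_cons,
        Polynomial.rootMultiplicity_mul
          (mul_ne_zero (hf a (Finset.mem_cons_self a S))
            (Finset.prod_ne_zero_iff.mpr fun j hj => hf j (Finset.mem_cons_of_mem hj))),
        ih fun j hj => hf j (Finset.mem_cons_of_mem hj)]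

lemma rm_U_self {t : ℕ} (ht : 1 ≤ t) :
    Polynomial.rootMultiplicity ((t : ℚ)⁻¹) (U t) = 1 := by
  have htQ : (t : ℚ) ≠ 0 := Nat.cast_ne_zero.mpr (by omega)
  have hU : U t = Polynomial.C (-(t : ℚ)) * (Polynomial.X - Polynomial.C ((t : ℚ)⁻¹)) := by
    rw [U, mul_sub, ← Polynomial.C_mul, neg_mul, mul_inv_cancel₀ htQ]
    simp only [map_neg, map_one]
    ring
  rw [hU, Polynomial.rootMultiplicity_mul
    (mul_ne_zero (fun h0 => htQ (neg_eq_zero.mp (Polynomial.C_eq_zero.mp h0)))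
      (Polynomial.X_sub_C_ne_zero _)),
    Polynomial.rootMultiplicity_C, Polynomial.rootMultiplicity_X_sub_C_self]

lemma rm_U_ne {j t : ℕ} (hj : 1 ≤ j) (ht : 1 ≤ t) (hne : j ≠ t) :
    Polynomial.rootMultiplicity ((t : ℚ)⁻¹) (U j) = 0 := by
  apply Polynomial.rootMultiplicity_eq_zero
  intro h
  rw [Polynomial.IsRoot, U] at h
  simp at h
  have htQ : (t : ℚ) ≠ 0 := Nat.cast_ne_zero.mpr (by omega)
  have : (j : ℚ) = (t : ℚ) := by field_simp at h; linarith
  exact hne (Nat.cast_injective this)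

/-- Core contradiction: `a^r = C c · b^r · ∏_{j∈S}(1-jX)` is impossible when the product
has a simple root. -/
lemma no_pow_eq {rr : ℕ} (hrr : 2 ≤ rr) {a b : ℚ[X]} {c : ℚ} {S : Finset ℕ}
    (hS : ∀ j ∈ S, 1 ≤ j) {t : ℕ} (ht : t ∈ S) (ha : a ≠ 0)
    (h : a ^ rr = Polynomial.C c * (b ^ rr * ∏ j ∈ S, U j)) : False := by
  have harr : a ^ rr ≠ 0 := pow_ne_zero _ ha
  have hprod : (∏ j ∈ S, U j) ≠ 0 :=
    Finset.prod_ne_zero_iff.mpr fun j hj => U_ne_zero (hS j hj)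
  have hc : Polynomial.C c ≠ 0 := fun h0 => harr (by rw [h, h0, zero_mul])
  have hb : b ≠ 0 := by
    intro h0
    apply harr
    rw [h, h0]
    have : rr ≠ 0 := by omega
    simp [zero_pow this]
  have hbrr : b ^ rr * ∏ j ∈ S, U j ≠ 0 := mul_ne_zero (pow_ne_zero _ hb) hprod
  have e := congrArg (Polynomial.rootMultiplicity ((t : ℚ)⁻¹)) h
  rw [rm_pow _ a ha, Polynomial.rootMultiplicity_mul (mul_ne_zero hc hbrr),
    Polynomial.rootMultiplicity_C,
    Polynomial.rootMultiplicity_mul hbrr, rm_pow _ b hb,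
    rm_prod _ S U (fun j hj => U_ne_zero (hS j hj))] at e
  have hsum : (∑ j ∈ S, Polynomial.rootMultiplicity ((t : ℚ)⁻¹) (U j)) = 1 := by
    rw [Finset.sum_eq_single t]
    · exact rm_U_self (hS t ht)
    · intro j hj hne
      exact rm_U_ne (hS j hj) (hS t ht) hne
    · intro h0; exact absurd ht h0
  rw [hsum] at e
  -- e : rr * m_a = 0 + (rr * m_b + 1)
  have h0 : (rr * Polynomial.rootMultiplicity ((t:ℚ)⁻¹) a) % rr = 0 := Nat.mul_mod_right _ _
  rw [e] at h0
  rw [zero_add, Nat.add_comm, Nat.add_mul_mod_self_left] at h0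
  rw [Nat.mod_eq_of_lt (by omega)] at h0
  exact one_ne_zero h0

lemma phi_C (a : ℚ) : φ (Polynomial.C a) = PowerSeries.C a := by
  rw [Polynomial.coeToPowerSeries.ringHom_apply, Polynomial.coe_C]

lemma derivative_finset_prod (S : Finset ℕ) (f : ℕ → ℚ[X]) :
    Polynomial.derivative (∏ j ∈ S, f j)
      = ∑ j ∈ S, (∏ k ∈ S.erase j, f k) * Polynomial.derivative (f j) := by
  induction S using Finset.induction_on with
  | empty => simp
  | @insert a S' ha ih =>
      have hterm : ∀ j ∈ S', (∏ k ∈ (insert a S').erase j, f k) * Polynomial.derivative (f j)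
          = f a * ((∏ k ∈ S'.erase j, f k) * Polynomial.derivative (f j)) := by
        intro j hj
        rw [Finset.erase_insert_of_ne (fun h => ha (h ▸ hj) : a ≠ j),
          Finset.prod_insert (fun h => ha (Finset.mem_of_mem_erase h)), mul_assoc]
      rw [Finset.sum_insert ha, Finset.erase_insert ha, Finset.sum_congr rfl hterm,
        ← Finset.mul_sum, ← ih, Finset.prod_insert ha, Polynomial.derivative_mul]
      ring

/-- The rational-function part `Â_β = (1/r)·Σ_{j<β} j/(1-jX)` as a power series. -/
noncomputable def Ahat (r β : ℕ) : ℚ⟦X⟧ :=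
  PowerSeries.C (1 / r : ℚ) *
    ∑ j ∈ Finset.Icc 1 (β - 1), PowerSeries.C (j : ℚ) * (φ (U j))⁻¹

/-- The series `ω_β = ∏_{j<β} (1-jX)^{-1/r}`. -/
noncomputable def omegaS (r β : ℕ) : ℚ⟦X⟧ := odeSol (Ahat r β)

lemma constantCoeff_omegaS (r β : ℕ) :
    PowerSeries.constantCoeff (omegaS r β) = 1 := constantCoeff_odeSol _

lemma omegaS_ne_zero (r β : ℕ) : omegaS r β ≠ 0 := fun h => by
  have := constantCoeff_omegaS r β
  rw [h, map_zero] at this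
  exact zero_ne_one this

lemma deriv_omegaS (r β : ℕ) : DD (omegaS r β) = Ahat r β * omegaS r β := deriv_odeSol _

/-- `T·Â_β = B_β` as power series. -/
lemma key_TB (r M β : ℕ) (hr : (r : ℚ) ≠ 0) (hβM : β - 1 ≤ M) :
    φ (TQ r M) * Ahat r β = φ (BQ M β) := by
  rw [TQ, BQ, Ahat]
  simp only [map_mul, map_prod, map_sum, phi_C]
  have h1 : ∀ j ∈ Finset.Icc 1 (β - 1),
      (∏ i ∈ Finset.Icc 1 M, φ (U i)) * (φ (U j))⁻¹
        = ∏ i ∈ (Finset.Icc 1 M).erase j, φ (U i) := by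
    intro j hj
    rw [Finset.mem_Icc] at hj
    have hjM : j ∈ Finset.Icc 1 M := Finset.mem_Icc.mpr ⟨hj.1, by omega⟩

    rw [← Finset.mul_prod_erase _ _ hjM, mul_comm (φ (U j)), mul_assoc, U_mul_inv, mul_one]
  rw [Finset.mul_sum, Finset.mul_sum]
  refine Finset.sum_congr rfl fun j hj => ?_
  calc PowerSeries.C (r:ℚ) * (∏ i ∈ Finset.Icc 1 M, φ (U i))
        * (PowerSeries.C (1/(r:ℚ)) * (PowerSeries.C (j:ℚ) * (φ (U j))⁻¹))
      = (PowerSeries.C (r:ℚ) * PowerSeries.C (1/(r:ℚ))) * (PowerSeries.C (j:ℚ)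
          * ((∏ i ∈ Finset.Icc 1 M, φ (U i)) * (φ (U j))⁻¹)) := by ring
    _ = PowerSeries.C (j:ℚ) * ∏ i ∈ (Finset.Icc 1 M).erase j, φ (U i) := by
          rw [h1 j hj, ← map_mul, mul_one_div, div_self hr, map_one, one_mul]

/-- `ω_β^r · p_β = 1`. -/
lemma omegaS_pow (r β : ℕ) (hr1 : 1 ≤ r) (hr : (r : ℚ) ≠ 0) :
    omegaS r β ^ r * φ (pQ β) = 1 := by
  set ω := omegaS r β with hω
  set g : ℚ⟦X⟧ := ω ^ r * φ (pQ β) with hg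
  have hder : ∀ j : ℕ, Polynomial.derivative (U j) = Polynomial.C (-(j:ℚ)) := by
    intro j
    rw [U]
    simp
  have claim0 : φ (Polynomial.derivative (pQ β))
      + (PowerSeries.C (r : ℚ)) * (Ahat r β * φ (pQ β)) = 0 := by
    have h2 : Polynomial.derivative (pQ β) = -BQ (β - 1) β := by
      rw [pQ, derivative_finset_prod, BQ, ← Finset.sum_neg_distrib]
      refine Finset.sum_congr rfl fun j hj => ?_
      rw [hder j, map_neg]
      ring
    have h1 : φ (TQ r (β - 1)) * Ahat r β = φ (BQ (β - 1) β) :=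
      key_TB r (β - 1) β hr le_rfl
    have h3 : PowerSeries.C (r:ℚ) * (Ahat r β * φ (pQ β)) = φ (TQ r (β - 1)) * Ahat r β := by
      rw [TQ, map_mul, phi_C, pQ]
      ring
    rw [h2, h3, h1, map_neg]
    ring
  have hDg : DD g = 0 := by
    rw [hg, Dmul, phi_deriv, Derivation.leibniz_pow, deriv_omegaS]
    rw [nsmul_eq_mul, smul_eq_mul]
    have hpow : ω ^ (r - 1) * (Ahat r β * ω) = Ahat r β * ω ^ r := by
      rw [← mul_assoc, mul_comm (ω ^ (r-1)), mul_assoc, pow_sub_one_mul (by omega : r ≠ 0)]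
    rw [hpow]
    rw [show (r : ℚ⟦X⟧) = PowerSeries.C (r : ℚ) from (map_natCast (PowerSeries.C (R := ℚ)) r).symm]
    calc ω ^ r * φ (Polynomial.derivative (pQ β))
          + φ (pQ β) * (PowerSeries.C (r:ℚ) * (Ahat r β * ω ^ r))
        = ω ^ r * (φ (Polynomial.derivative (pQ β))
            + PowerSeries.C (r:ℚ) * (Ahat r β * φ (pQ β))) := by ring
      _ = 0 := by rw [claim0, mul_zero]
  -- derivative zero implies constant
  have hconst : ∀ n, PowerSeries.coeff (n + 1) g = 0 := by
    intro n
    have := congrArg (PowerSeries.coeff n) hDg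
    rw [PowerSeries.coeff_derivative, map_zero] at this
    have hn1 : ((n : ℚ) + 1) ≠ 0 := by positivity
    exact (mul_eq_zero.mp this).resolve_right hn1
  have hcc : PowerSeries.constantCoeff g = 1 := by
    rw [hg, map_mul, map_pow, hω, constantCoeff_omegaS, one_pow, one_mul, constantCoeff_phi, pQ]
    rw [Polynomial.coeff_zero_eq_eval_zero]
    rw [Polynomial.eval_prod]
    rw [Finset.prod_eq_one]
    intro j hj
    rw [U]
    simp
  ext n
  cases n with
  | zero =>
      rw [PowerSeries.coeff_zero_eq_constantCoeff_apply, hcc,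
        PowerSeries.coeff_zero_eq_constantCoeff_apply, map_one]
  | succ n =>
      rw [hconst n, PowerSeries.coeff_one]
      simp

/-! ### Linear independence of `1, ω₁, ω₂` over polynomials -/

lemma phi_ne_zero {q : ℚ[X]} (hq : q ≠ 0) : φ q ≠ 0 :=
  fun h => hq (phi_inj (by rw [h, map_zero]))

lemma Icc_one_eq_Ico (γ : ℕ) (hγ : 1 ≤ γ) : Finset.Icc 1 (γ - 1) = Finset.Ico 1 γ := by
  rw [← Finset.Ico_add_one_right_eq_Icc]
  congr 1
  omega

lemma pQ_split {β₁ β₂ : ℕ} (h1 : 1 ≤ β₁) (h12 : β₁ ≤ β₂) :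
    pQ β₂ = pQ β₁ * ∏ j ∈ Finset.Ico β₁ β₂, U j := by
  rw [pQ, pQ, Icc_one_eq_Ico β₂ (by omega), Icc_one_eq_Ico β₁ h1,
    Finset.prod_Ico_consecutive U h1 h12]

lemma indep2 {rr β : ℕ} (hrr : 2 ≤ rr) (hβ : 2 ≤ β) {ω : ℚ⟦X⟧}
    (hω : ω ^ rr * φ (pQ β) = 1) {a b : ℚ[X]}
    (hab : φ a + φ b * ω = 0) : a = 0 ∧ b = 0 := by
  by_cases hb : b = 0
  · subst hb
    rw [map_zero, zero_mul, add_zero] at hab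
    exact ⟨phi_inj (by rw [hab, map_zero]), rfl⟩
  · exfalso
    have h1 : φ (-b) * ω = φ a := by
      rw [map_neg]
      linear_combination -hab
    have hb' : (-b : ℚ[X]) ≠ 0 := neg_ne_zero.mpr hb
    have h3 : φ (a ^ rr * pQ β) = φ ((-b) ^ rr) := by
      rw [map_mul, map_pow, map_pow, ← h1]
      calc (φ (-b) * ω) ^ rr * φ (pQ β) = φ (-b) ^ rr * (ω ^ rr * φ (pQ β)) := by ring
        _ = φ (-b) ^ rr := by rw [hω, mul_one]
    have h4 : (-b) ^ rr = Polynomial.C (1:ℚ) * (a ^ rr * ∏ j ∈ Finset.Icc 1 (β-1), U j) := by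
      rw [map_one, one_mul, ← pQ]
      exact (phi_inj h3).symm
    exact no_pow_eq hrr (fun j hj => (Finset.mem_Icc.mp hj).1)
      (Finset.mem_Icc.mpr ⟨le_refl 1, by omega⟩) hb' h4

lemma indep2' {rr β₁ β₂ : ℕ} (hrr : 2 ≤ rr) (hβ : 2 ≤ β₁) (h12 : β₁ < β₂)
    {ω₁ ω₂ : ℚ⟦X⟧}
    (hω₁ : ω₁ ^ rr * φ (pQ β₁) = 1) (hω₂ : ω₂ ^ rr * φ (pQ β₂) = 1)
    {a b : ℚ[X]} (hab : φ a * ω₁ + φ b * ω₂ = 0) : a = 0 ∧ b = 0 := by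
  have hω₁ne : ω₁ ≠ 0 := fun h => by
    rw [h, zero_pow (show rr ≠ 0 by omega), zero_mul] at hω₁
    exact zero_ne_one hω₁
  by_cases hb : b = 0
  · subst hb
    rw [map_zero, zero_mul, add_zero] at hab
    rcases mul_eq_zero.mp hab with h | h
    · exact ⟨phi_inj (by rw [h, map_zero]), rfl⟩
    · exact absurd h hω₁ne
  · exfalso
    have h1 : φ (-a) * ω₁ = φ b * ω₂ := by
      rw [map_neg]
      linear_combination -hab
    have ha' : (-a : ℚ[X]) ≠ 0 := by
      intro h0
      rw [h0, map_zero, zero_mul] at h1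
      rcases mul_eq_zero.mp h1.symm with h | h
      · exact hb (phi_inj (by rw [h, map_zero]))
      · exact hb (by
          exfalso
          rw [h, zero_pow (show rr ≠ 0 by omega), zero_mul] at hω₂
          exact zero_ne_one hω₂)
    have h3 : φ (b ^ rr) = φ ((-a) ^ rr * ∏ j ∈ Finset.Ico β₁ β₂, U j) := by
      have hpow : φ ((-a)) ^ rr * ω₁ ^ rr = φ b ^ rr * ω₂ ^ rr := by
        rw [← mul_pow, ← mul_pow, h1]
      have e2 : φ (pQ β₂) = φ (pQ β₁) * φ (∏ j ∈ Finset.Ico β₁ β₂, U j) := by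
        rw [← map_mul, ← pQ_split (by omega) (le_of_lt h12)]
      have := congrArg (· * φ (pQ β₂)) hpow
      calc φ (b ^ rr) = φ b ^ rr * (ω₂ ^ rr * φ (pQ β₂)) := by rw [hω₂, mul_one, map_pow]
        _ = φ b ^ rr * ω₂ ^ rr * φ (pQ β₂) := by ring
        _ = φ (-a) ^ rr * ω₁ ^ rr * φ (pQ β₂) := by rw [hpow]
        _ = φ (-a) ^ rr * (ω₁ ^ rr * φ (pQ β₁)) * φ (∏ j ∈ Finset.Ico β₁ β₂, U j) := by
              rw [e2]; ring
        _ = φ ((-a) ^ rr * ∏ j ∈ Finset.Ico β₁ β₂, U j) := by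
              rw [hω₁, mul_one, map_mul, map_pow]
    have h4 : b ^ rr = Polynomial.C (1:ℚ) * ((-a) ^ rr * ∏ j ∈ Finset.Ico β₁ β₂, U j) := by
      rw [map_one, one_mul]
      exact phi_inj h3
    exact no_pow_eq hrr (fun j hj => by
        have := (Finset.mem_Ico.mp hj).1
        omega)
      (Finset.mem_Ico.mpr ⟨le_refl β₁, h12⟩) hb h4

lemma TQ_ne_zero {r M : ℕ} (hr : 1 ≤ r) : TQ r M ≠ 0 := by
  apply mul_ne_zero
  · exact fun h => by
      have := Polynomial.C_eq_zero.mp h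
      have : r = 0 := Nat.cast_eq_zero.mp this
      omega
  · exact Finset.prod_ne_zero_iff.mpr fun j hj => U_ne_zero (Finset.mem_Icc.mp hj).1

lemma omega_pow_ne_zero {rr : ℕ} (hrr : 1 ≤ rr) {β : ℕ} {ω : ℚ⟦X⟧}
    (hω : ω ^ rr * φ (pQ β) = 1) : ω ≠ 0 := fun h => by
  rw [h, zero_pow (show rr ≠ 0 by omega), zero_mul] at hω
  exact zero_ne_one hω

/-- Main independence: `1, ω₁, ω₂` are linearly independent over `ℚ[X]`. -/
lemma indep3 {r M β₁ β₂ : ℕ} (hr : 2 ≤ r) (hβ₁ : 2 ≤ β₁) (h12 : β₁ < β₂) (hβ₂M : β₂ ≤ M)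
    {ω₁ ω₂ : ℚ⟦X⟧}
    (hω₁p : ω₁ ^ r * φ (pQ β₁) = 1) (hω₂p : ω₂ ^ r * φ (pQ β₂) = 1)
    (hω₁d : φ (TQ r M) * DD ω₁ = φ (BQ M β₁) * ω₁)
    (hω₂d : φ (TQ r M) * DD ω₂ = φ (BQ M β₂) * ω₂)
    {q₀ q₁ q₂ : ℚ[X]} (h : φ q₀ + φ q₁ * ω₁ + φ q₂ * ω₂ = 0) :
    q₀ = 0 ∧ q₁ = 0 ∧ q₂ = 0 := by
  have hω₁ne : ω₁ ≠ 0 := omega_pow_ne_zero (by omega) hω₁p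
  have hω₂ne : ω₂ ≠ 0 := omega_pow_ne_zero (by omega) hω₂p
  have hTne : φ (TQ r M) ≠ 0 := phi_ne_zero (TQ_ne_zero (by omega))
  by_cases hq₂ : q₂ = 0
  · subst hq₂
    rw [map_zero, zero_mul, add_zero] at h
    obtain ⟨h0, h1⟩ := indep2 hr hβ₁ hω₁p h
    exact ⟨h0, h1, rfl⟩
  exfalso
  by_cases hq₁ : q₁ = 0
  · subst hq₁
    rw [map_zero, zero_mul, add_zero] at h
    exact hq₂ (indep2 hr (by omega) hω₂p h).2
  -- all three nonzero; differentiate and eliminate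
  set L₀ : ℚ[X] := TQ r M * Polynomial.derivative q₀ with hL₀
  set L₁ : ℚ[X] := TQ r M * Polynomial.derivative q₁ + BQ M β₁ * q₁ with hL₁
  set L₂ : ℚ[X] := TQ r M * Polynomial.derivative q₂ + BQ M β₂ * q₂ with hL₂
  have hL : ∀ (B : ℚ[X]) (ω : ℚ⟦X⟧), φ (TQ r M) * DD ω = φ B * ω → ∀ q : ℚ[X],
      φ (TQ r M) * DD (φ q * ω)
        = φ (TQ r M * Polynomial.derivative q + B * q) * ω := by
    intro B ω hω q
    rw [Dmul, map_add, map_mul, map_mul]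
    calc φ (TQ r M) * (φ q * DD ω + ω * DD (φ q))
        = φ q * (φ (TQ r M) * DD ω) + (φ (TQ r M) * DD (φ q)) * ω := by ring
      _ = φ q * (φ B * ω) + (φ (TQ r M) * φ (Polynomial.derivative q)) * ω := by
            rw [hω, phi_deriv]
      _ = _ := by ring
  have h2 : φ L₀ + φ L₁ * ω₁ + φ L₂ * ω₂ = 0 := by
    have hD := congrArg (fun z => φ (TQ r M) * DD z) h
    simp only [map_zero, mul_zero] at hD
    rw [map_add, map_add, mul_add, mul_add] at hD
    rw [hL (BQ M β₁) ω₁ hω₁d q₁, hL (BQ M β₂) ω₂ hω₂d q₂] at hD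
    rw [phi_deriv, ← map_mul] at hD
    exact hD
  have h3 : φ (L₂ * q₀ - q₂ * L₀) + φ (L₂ * q₁ - q₂ * L₁) * ω₁ = 0 := by
    simp only [map_sub, map_mul]
    linear_combination φ L₂ * h - φ q₂ * h2
  obtain ⟨h30, h31⟩ := indep2 hr hβ₁ hω₁p h3
  have h31' : φ L₂ * φ q₁ = φ q₂ * φ L₁ := by
    rw [← map_mul, ← map_mul]
    exact congrArg _ (sub_eq_zero.mp h31)
  have hu : φ q₁ * ω₁ ≠ 0 := mul_ne_zero (phi_ne_zero hq₁) hω₁ne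
  have hv : φ q₂ * ω₂ ≠ 0 := mul_ne_zero (phi_ne_zero hq₂) hω₂ne
  have huv : (φ q₁ * ω₁) * DD (φ q₂ * ω₂) = DD (φ q₁ * ω₁) * (φ q₂ * ω₂) := by
    apply mul_left_cancel₀ hTne
    calc φ (TQ r M) * ((φ q₁ * ω₁) * DD (φ q₂ * ω₂))
        = (φ q₁ * ω₁) * (φ (TQ r M) * DD (φ q₂ * ω₂)) := by ring
      _ = (φ q₁ * ω₁) * (φ L₂ * ω₂) := by rw [hL (BQ M β₂) ω₂ hω₂d q₂]
      _ = (φ q₂ * ω₂) * (φ L₁ * ω₁) := by linear_combination ω₁ * ω₂ * h31'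
      _ = (φ L₁ * ω₁) * (φ q₂ * ω₂) := by ring
      _ = (φ (TQ r M) * DD (φ q₁ * ω₁)) * (φ q₂ * ω₂) := by
            rw [hL (BQ M β₁) ω₁ hω₁d q₁]
      _ = φ (TQ r M) * (DD (φ q₁ * ω₁) * (φ q₂ * ω₂)) := by ring
  obtain ⟨c, hc⟩ := wronskian2 hu huv
  have hcne : c ≠ 0 := fun h0 => hv (by rw [hc, h0, map_zero, zero_mul])
  have h5 : φ (q₂ ^ r) = φ (Polynomial.C (c ^ r) * (q₁ ^ r * ∏ j ∈ Finset.Ico β₁ β₂, U j)) := by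
    have hcpow : (φ q₂ * ω₂) ^ r = PowerSeries.C (c ^ r) * (φ q₁ * ω₁) ^ r := by
      rw [hc, mul_pow, map_pow]
    have e2 : φ (pQ β₂) = φ (pQ β₁) * φ (∏ j ∈ Finset.Ico β₁ β₂, U j) := by
      rw [← map_mul, ← pQ_split (by omega) (le_of_lt h12)]
    calc φ (q₂ ^ r) = φ q₂ ^ r * (ω₂ ^ r * φ (pQ β₂)) := by rw [hω₂p, mul_one, map_pow]
      _ = (φ q₂ * ω₂) ^ r * φ (pQ β₂) := by ring
      _ = PowerSeries.C (c ^ r) * (φ q₁ * ω₁) ^ r * φ (pQ β₂) := by rw [hcpow]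
      _ = PowerSeries.C (c ^ r) * φ q₁ ^ r * (ω₁ ^ r * φ (pQ β₁))
            * φ (∏ j ∈ Finset.Ico β₁ β₂, U j) := by rw [e2]; ring
      _ = φ (Polynomial.C (c ^ r)) * φ (q₁ ^ r) * φ (∏ j ∈ Finset.Ico β₁ β₂, U j) := by
            rw [hω₁p, mul_one, phi_C, map_pow, map_pow]
      _ = _ := by rw [← map_mul, ← map_mul, mul_assoc]
  have h6 : q₂ ^ r = Polynomial.C (c ^ r) * (q₁ ^ r * ∏ j ∈ Finset.Ico β₁ β₂, U j) :=
    phi_inj h5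
  exact no_pow_eq hr (fun j hj => by
      have := (Finset.mem_Ico.mp hj).1
      omega)
    (Finset.mem_Ico.mpr ⟨le_refl β₁, h12⟩) hq₂ h6

/-- The operator step: `T·D(φq·ω) = φ(T·q′ + B·q)·ω`. -/
lemma Lstep {T B : ℚ[X]} {ω : ℚ⟦X⟧} (hω : φ T * DD ω = φ B * ω) (q : ℚ[X]) :
    φ T * DD (φ q * ω) = φ (T * Polynomial.derivative q + B * q) * ω := by
  rw [Dmul, map_add, map_mul, map_mul]
  calc φ T * (φ q * DD ω + ω * DD (φ q))
      = φ q * (φ T * DD ω) + (φ T * DD (φ q)) * ω := by ring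
    _ = φ q * (φ B * ω) + (φ T * φ (Polynomial.derivative q)) * ω := by
          rw [hω, phi_deriv]
    _ = _ := by ring

/-- `Pbr` over `ℚ`. -/
noncomputable def PbrQ (T B P : ℚ[X]) : ℕ → ℚ[X]
  | 0 => P
  | k + 1 => T * Polynomial.derivative (PbrQ T B P k) + B * PbrQ T B P k

lemma pbr_iter {T B : ℚ[X]} {ω : ℚ⟦X⟧} (hω : φ T * DD ω = φ B * ω) (q : ℚ[X]) :
    ∀ k, φ (PbrQ T B q k) * ω = (fun z => φ T * DD z)^[k] (φ q * ω) := by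
  intro k
  induction k with
  | zero => rfl
  | succ k ih =>
      rw [Function.iterate_succ_apply', ← ih, PbrQ, Lstep hω]

lemma hω0 (T : ℚ[X]) : φ T * DD (1 : ℚ⟦X⟧) = φ 0 * 1 := by
  simp


/-- Main auxiliary result: the 6-term determinant expansion cannot vanish. -/
lemma main {r M β₁ β₂ : ℕ} (hr : 2 ≤ r) (hM : 2 ≤ M) (hβ₁ : 2 ≤ β₁) (h12 : β₁ < β₂)
    (hβ₂M : β₂ ≤ M) {P₀ P₁ P₂ : Polynomial ℤ} (h₀ : P₀ ≠ 0) (h₁ : P₁ ≠ 0) (h₂ : P₂ ≠ 0)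
    (hdet :
      Pbr (Tpoly r M) 0 P₀ 0 * Pbr (Tpoly r M) (Bpoly M β₁) P₁ 1 * Pbr (Tpoly r M) (Bpoly M β₂) P₂ 2 -
              Pbr (Tpoly r M) 0 P₀ 0 * Pbr (Tpoly r M) (Bpoly M β₂) P₂ 1 * Pbr (Tpoly r M) (Bpoly M β₁) P₁ 2 -
            Pbr (Tpoly r M) (Bpoly M β₁) P₁ 0 * Pbr (Tpoly r M) 0 P₀ 1 * Pbr (Tpoly r M) (Bpoly M β₂) P₂ 2 +
          Pbr (Tpoly r M) (Bpoly M β₁) P₁ 0 * Pbr (Tpoly r M) (Bpoly M β₂) P₂ 1 * Pbr (Tpoly r M) 0 P₀ 2 +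
        Pbr (Tpoly r M) (Bpoly M β₂) P₂ 0 * Pbr (Tpoly r M) 0 P₀ 1 * Pbr (Tpoly r M) (Bpoly M β₁) P₁ 2 -
      Pbr (Tpoly r M) (Bpoly M β₂) P₂ 0 * Pbr (Tpoly r M) (Bpoly M β₁) P₁ 1 * Pbr (Tpoly r M) 0 P₀ 2 = 0) :
    False := by
  have hrQ : (r : ℚ) ≠ 0 := Nat.cast_ne_zero.mpr (by omega)
  set ψ : Polynomial ℤ →+* ℚ[X] := Polynomial.mapRingHom (Int.castRingHom ℚ) with hψdef
  have hψU : ∀ j : ℕ, ψ (1 - Polynomial.C (j : ℤ) * Polynomial.X) = U j := by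
    intro j
    rw [map_sub, map_one, map_mul, hψdef, Polynomial.coe_mapRingHom, Polynomial.map_C,
      Polynomial.map_X, U]
    norm_num
  have hψC : ∀ j : ℕ, ψ (Polynomial.C (j : ℤ)) = Polynomial.C (j : ℚ) := by
    intro j
    rw [hψdef, Polynomial.coe_mapRingHom, Polynomial.map_C]
    norm_num
  have hmapT : ψ (Tpoly r M) = TQ r M := by
    rw [Tpoly, TQ, map_mul, map_prod, hψC r]
    exact congrArg _ (Finset.prod_congr rfl fun j _ => hψU j)
  have hmapB : ∀ β, ψ (Bpoly M β) = BQ M β := by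
    intro β
    rw [Bpoly, BQ, map_sum]
    refine Finset.sum_congr rfl fun j _ => ?_
    rw [map_mul, map_prod, hψC j]
    exact congrArg _ (Finset.prod_congr rfl fun j' _ => hψU j')
  have hmapP : ∀ (B : Polynomial ℤ) (Bq : ℚ[X]), ψ B = Bq → ∀ (P : Polynomial ℤ) (k : ℕ),
      ψ (Pbr (Tpoly r M) B P k) = PbrQ (TQ r M) Bq (ψ P) k := by
    intro B Bq hB P k
    induction k with
    | zero => rfl
    | succ k ih =>
        show ψ (Tpoly r M * Polynomial.derivative (Pbr (Tpoly r M) B P k)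
            + B * Pbr (Tpoly r M) B P k) = _
        rw [map_add, map_mul, map_mul, hmapT, hB, ih]
        have hd : ψ (Polynomial.derivative (Pbr (Tpoly r M) B P k))
            = Polynomial.derivative (PbrQ (TQ r M) Bq (ψ P) k) := by
          rw [← ih, hψdef, Polynomial.coe_mapRingHom,
            ← Polynomial.derivative_map (Pbr (Tpoly r M) B P k) (Int.castRingHom ℚ)]
        rw [hd]
        rfl
  -- the omegas
  set ω₁ : ℚ⟦X⟧ := omegaS r β₁ with hω₁def
  set ω₂ : ℚ⟦X⟧ := omegaS r β₂ with hω₂def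
  have hω₁p : ω₁ ^ r * φ (pQ β₁) = 1 := omegaS_pow r β₁ (by omega) hrQ
  have hω₂p : ω₂ ^ r * φ (pQ β₂) = 1 := omegaS_pow r β₂ (by omega) hrQ
  have hω₁d : φ (TQ r M) * DD ω₁ = φ (BQ M β₁) * ω₁ := by
    rw [hω₁def, deriv_omegaS, ← key_TB r M β₁ hrQ (by omega)]
    ring
  have hω₂d : φ (TQ r M) * DD ω₂ = φ (BQ M β₂) * ω₂ := by
    rw [hω₂def, deriv_omegaS, ← key_TB r M β₂ hrQ (by omega)]
    ring
  have hω₁ne : ω₁ ≠ 0 := omega_pow_ne_zero (by omega) hω₁p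
  have hω₂ne : ω₂ ≠ 0 := omega_pow_ne_zero (by omega) hω₂p
  -- map the determinant identity to power series
  have h6 := congrArg (fun p => φ (ψ p)) hdet
  simp only [map_sub, map_add, map_mul, map_zero] at h6
  -- the three functions
  set f₀ : ℚ⟦X⟧ := φ (ψ P₀) * 1 with hf₀
  set f₁ : ℚ⟦X⟧ := φ (ψ P₁) * ω₁ with hf₁
  set f₂ : ℚ⟦X⟧ := φ (ψ P₂) * ω₂ with hf₂
  set δ : ℚ⟦X⟧ → ℚ⟦X⟧ := fun z => φ (TQ r M) * DD z with hδ
  have key₀ : ∀ k, φ (ψ (Pbr (Tpoly r M) 0 P₀ k)) * 1 = δ^[k] f₀ := by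
    intro k
    rw [hmapP 0 0 (map_zero ψ) P₀ k, hf₀, hδ]
    exact pbr_iter (hω0 (TQ r M)) (ψ P₀) k
  have key₁ : ∀ k, φ (ψ (Pbr (Tpoly r M) (Bpoly M β₁) P₁ k)) * ω₁ = δ^[k] f₁ := by
    intro k
    rw [hmapP (Bpoly M β₁) (BQ M β₁) (hmapB β₁) P₁ k, hf₁, hδ]
    exact pbr_iter hω₁d (ψ P₁) k
  have key₂ : ∀ k, φ (ψ (Pbr (Tpoly r M) (Bpoly M β₂) P₂ k)) * ω₂ = δ^[k] f₂ := by
    intro k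
    rw [hmapP (Bpoly M β₂) (BQ M β₂) (hmapB β₂) P₂ k, hf₂, hδ]
    exact pbr_iter hω₂d (ψ P₂) k
  -- the Wronskian-with-δ identity
  have h7 : δ^[0] f₀ * δ^[1] f₁ * δ^[2] f₂ - δ^[0] f₀ * δ^[1] f₂ * δ^[2] f₁
      - δ^[0] f₁ * δ^[1] f₀ * δ^[2] f₂ + δ^[0] f₁ * δ^[1] f₂ * δ^[2] f₀
      + δ^[0] f₂ * δ^[1] f₀ * δ^[2] f₁ - δ^[0] f₂ * δ^[1] f₁ * δ^[2] f₀ = 0 := by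
    rw [← key₀ 0, ← key₁ 1, ← key₂ 2, ← key₂ 1, ← key₁ 2, ← key₁ 0, ← key₀ 1, ← key₂ 0,
      ← key₀ 2]
    linear_combination (ω₁ * ω₂) * h6
  -- unfold the iterates
  have hit0 : ∀ z : ℚ⟦X⟧, δ^[0] z = z := fun z => rfl
  have hit1 : ∀ z : ℚ⟦X⟧, δ^[1] z = δ z := fun z => rfl
  have hit2 : ∀ z : ℚ⟦X⟧, δ^[2] z = δ (δ z) := fun z => rfl
  simp only [hit0, hit1, hit2] at h7
  simp only [hδ] at h7
  rw [Dmul (φ (TQ r M)) (DD f₀), Dmul (φ (TQ r M)) (DD f₁), Dmul (φ (TQ r M)) (DD f₂)] at h7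
  have hTne : φ (TQ r M) ≠ 0 := phi_ne_zero (TQ_ne_zero (by omega))
  have hW3 : φ (TQ r M) ^ 3 *
      (f₀ * DD f₁ * DD (DD f₂) - f₀ * DD (DD f₁) * DD f₂ - DD f₀ * f₁ * DD (DD f₂)
        + DD (DD f₀) * f₁ * DD f₂ + DD f₀ * DD (DD f₁) * f₂ - DD (DD f₀) * DD f₁ * f₂) = 0 := by
    linear_combination h7
  have hW : f₀ * DD f₁ * DD (DD f₂) - f₀ * DD (DD f₁) * DD f₂ - DD f₀ * f₁ * DD (DD f₂)
      + DD (DD f₀) * f₁ * DD f₂ + DD f₀ * DD (DD f₁) * f₂ - DD (DD f₀) * DD f₁ * f₂ = 0 := by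
    rcases mul_eq_zero.mp hW3 with h | h
    · exact absurd h (pow_ne_zero 3 hTne)
    · exact h
  obtain ⟨a, b, c, habc, hlin⟩ := wronskian3 hW
  have hind : φ (Polynomial.C a * ψ P₀) + φ (Polynomial.C b * ψ P₁) * ω₁
      + φ (Polynomial.C c * ψ P₂) * ω₂ = 0 := by
    simp only [map_mul, phi_C]
    rw [hf₀, hf₁, hf₂] at hlin
    linear_combination hlin
  obtain ⟨e₀, e₁, e₂⟩ := indep3 hr hβ₁ h12 hβ₂M hω₁p hω₂p hω₁d hω₂d hind
  have hψP : ∀ P : Polynomial ℤ, P ≠ 0 → ψ P ≠ 0 := by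
    intro P hP
    rw [hψdef, Polynomial.coe_mapRingHom]
    exact (Polynomial.map_ne_zero_iff (fun x y h => by
      have : (x:ℚ) = (y:ℚ) := h
      exact_mod_cast this)).mpr hP
  apply habc
  refine ⟨?_, ?_, ?_⟩
  · rcases mul_eq_zero.mp e₀ with h | h
    · exact Polynomial.C_eq_zero.mp h
    · exact absurd h (hψP P₀ h₀)
  · rcases mul_eq_zero.mp e₁ with h | h
    · exact Polynomial.C_eq_zero.mp h
    · exact absurd h (hψP P₁ h₁)
  · rcases mul_eq_zero.mp e₂ with h | h
    · exact Polynomial.C_eq_zero.mp h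
    · exact absurd h (hψP P₂ h₂)

end DetAux
end


/-- **The determinant polynomial is nonzero** (Lemma 5.4, after Siegel).
If `P₀, P₁, P₂ ∈ ℤ[X]` are all nonzero, then the determinant `Δ` of the `3×3` polynomial
matrix with `(k,i)` entry `P_i^{[k]}` (for `0 ≤ k, i ≤ 2`) is not the zero polynomial. -/
theorem determinant_polynomial_nonzero (r M : ℕ) (hr : 2 ≤ r) (hM : 2 ≤ M)
    (β₁ β₂ : ℕ) (hβ₁ : 2 ≤ β₁) (hβ₁₂ : β₁ < β₂) (hβ₂ : β₂ ≤ M)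
    (P₀ P₁ P₂ : Polynomial ℤ) (h₀ : P₀ ≠ 0) (h₁ : P₁ ≠ 0) (h₂ : P₂ ≠ 0) :
    Matrix.det (Matrix.of fun k i : Fin 3 =>
        Pbr (Tpoly r M) (![0, Bpoly M β₁, Bpoly M β₂] i) (![P₀, P₁, P₂] i) (k : ℕ))
      ≠ 0 := by
  intro hdet
  rw [Matrix.det_fin_three] at hdet
  simp only [Matrix.of_apply, Matrix.cons_val_zero, Matrix.cons_val_one, Matrix.head_cons,
    Matrix.cons_val_two, Matrix.tail_cons, Fin.val_zero, Fin.val_one, Fin.val_two,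
    Fin.isValue] at hdet
  exact DetAux.main hr hM hβ₁ hβ₁₂ hβ₂ h₀ h₁ h₂ hdet
end

section
/- Let r ≥ 2 and M ≥ 2 be integers and let β_1, β_2 be integers with 2 ≤ β_1 < β_2 ≤ M. Set T(X) := r·∏_{j=1}^{M}(1−jX) ∈ ℤ[X], B_0 := 0, and B_{β_i}(X) := Σ_{j=1}^{β_i−1} j·∏_{1≤j'≤M, j'≠j}(1−j'X) ∈ ℤ[X]. Let P_0, P_1, P_2 ∈ ℤ[X]. For i = 0, 1, 2 define P_i^{[0]} := P_i and P_i^{[k+1]} := T·(P_i^{[k]})′ + B_{β_i}·P_i^{[k]} (with B_{β_0} meaning B_0 = 0), and also define S_{i,0} := P_i, S_{i,k+1} := T·S_{i,k}′ − k·T′·S_{i,k} + B_{β_i}·S_{i,k}, and P_i^{⟨k⟩} := S_{i,k}/k! ∈ ℚ[X]. Suppose the determinant Δ of the 3×3 polynomial matrix whose (k,i) entry is P_i^{[k]} for 0 ≤ k, i ≤ 2 is not the zero polynomial. Let α ∈ ℚ be nonzero with T(α) ≠ 0, and write a for the multiplicity of α as a root of Δ. Then the (a+3)×3 rational matrix whose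 (k,i) entry is P_i^{⟨k⟩}(α) for 0 ≤ k ≤ a+2, 0 ≤ i ≤ 2 has rank three. -/
/-- The polynomials `S_k`, defined by `S_0 = P`, `S_{k+1} = T·S_k′ − k·T′·S_k + B·S_k`. -/
noncomputable def Sseq (T B P : Polynomial ℤ) : ℕ → Polynomial ℤ
  | 0 => P
  | k + 1 => T * Polynomial.derivative (Sseq T B P k)
      - (k : Polynomial ℤ) * Polynomial.derivative T * Sseq T B P k
      + B * Sseq T B P k

/-- The alternate Padé polynomials `P^{⟨k⟩} := S_k / k! ∈ ℚ[X]`. -/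
noncomputable def Pang (T B P : Polynomial ℤ) (k : ℕ) : Polynomial ℚ :=
  Polynomial.C ((k.factorial : ℚ)⁻¹) * (Sseq T B P k).map (Int.castRingHom ℚ)

namespace AngleAux

open Polynomial PowerSeries

/-- The taylor-shift-at-α map `ℤ[X] → ℚ⟦X⟧`, `p ↦ p(α + X)` as a power series. -/
noncomputable def phi (α : ℚ) : Polynomial ℤ →+* PowerSeries ℚ :=
  (Polynomial.coeToPowerSeries.ringHom).comp
    ((Polynomial.eval₂RingHom Polynomial.C (Polynomial.X + Polynomial.C α)).comp
      (Polynomial.mapRingHom (Int.castRingHom ℚ)))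

lemma phi_apply (α : ℚ) (p : Polynomial ℤ) :
    phi α p = (((p.map (Int.castRingHom ℚ)).comp (Polynomial.X + Polynomial.C α) : Polynomial ℚ) : PowerSeries ℚ) :=
  rfl

lemma phi_derivative (α : ℚ) (p : Polynomial ℤ) :
    d⁄dX ℚ (phi α p) = phi α (Polynomial.derivative p) := by
  rw [phi_apply, phi_apply, PowerSeries.derivative_coe, Polynomial.derivative_comp]
  simp [Polynomial.derivative_map]

lemma phi_constantCoeff (α : ℚ) (p : Polynomial ℤ) :
    PowerSeries.constantCoeff (phi α p) = Polynomial.aeval α p := by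
  rw [phi_apply, Polynomial.constantCoeff_coe, Polynomial.coeff_zero_eq_eval_zero,
    Polynomial.eval_comp]
  simp [Polynomial.eval_map, Polynomial.aeval_def]

lemma order_coe_poly (q : Polynomial ℚ) (hq : q ≠ 0) :
    (q : PowerSeries ℚ).order = q.natTrailingDegree := by
  rw [PowerSeries.order_eq_nat]
  constructor
  · rw [Polynomial.coeff_coe]
    exact Polynomial.coeff_natTrailingDegree_ne_zero.mpr hq
  · intro i hi
    rw [Polynomial.coeff_coe]
    exact Polynomial.coeff_eq_zero_of_lt_natTrailingDegree hi

lemma phi_order (α : ℚ) (p : Polynomial ℤ) (hp : p ≠ 0) :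
    (phi α p).order =
      Polynomial.rootMultiplicity α (p.map (Int.castRingHom ℚ)) := by
  have hmap : p.map (Int.castRingHom ℚ) ≠ 0 :=
    (Polynomial.map_ne_zero_iff (Int.cast_injective)).mpr hp
  rw [phi_apply, order_coe_poly _ (Polynomial.comp_X_add_C_ne_zero_iff.mpr hmap),
    Polynomial.rootMultiplicity_eq_natTrailingDegree]

/-- Coefficients of the solution of `E' = Q·E`, `E(0) = 1`. -/
noncomputable def expCoeff (Q : PowerSeries ℚ) : ℕ → ℚ
  | 0 => 1
  | n + 1 =>
      (∑ j ∈ Finset.range (n + 1), PowerSeries.coeff j Q * expCoeff Q (n - j)) / (n + 1)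
  decreasing_by omega

/-- The solution of `E' = Q·E`, `E(0) = 1` in `ℚ⟦X⟧`. -/
noncomputable def expS (Q : PowerSeries ℚ) : PowerSeries ℚ := PowerSeries.mk (expCoeff Q)

lemma expS_constantCoeff (Q : PowerSeries ℚ) :
    PowerSeries.constantCoeff (expS Q) = 1 := by
  have : PowerSeries.coeff 0 (expS Q) = 1 := by simp [expS, expCoeff]
  simpa [PowerSeries.coeff_zero_eq_constantCoeff] using this

lemma expS_isUnit (Q : PowerSeries ℚ) : IsUnit (expS Q) := by
  rw [PowerSeries.isUnit_iff_constantCoeff, expS_constantCoeff]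
  exact isUnit_one

lemma expS_deriv (Q : PowerSeries ℚ) : d⁄dX ℚ (expS Q) = Q * expS Q := by
  ext n
  rw [PowerSeries.coeff_derivative, PowerSeries.coeff_mul,
    Finset.Nat.sum_antidiagonal_eq_sum_range_succ_mk]
  show PowerSeries.coeff (n+1) (PowerSeries.mk (expCoeff Q)) * (n+1) = _
  rw [PowerSeries.coeff_mk, expCoeff]
  have h : ((n : ℚ) + 1) ≠ 0 := by positivity
  field_simp
  exact Finset.sum_congr rfl fun j hj => by simp [expS]

lemma iter_add (k : ℕ) (x y : PowerSeries ℚ) :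
    (d⁄dX ℚ)^[k] (x + y) = (d⁄dX ℚ)^[k] x + (d⁄dX ℚ)^[k] y := by
  induction k generalizing x y with
  | zero => simp
  | succ k ih => rw [Function.iterate_succ_apply, Function.iterate_succ_apply,
      Function.iterate_succ_apply, map_add, ih]

lemma iter_Cmul (k : ℕ) (c : ℚ) (x : PowerSeries ℚ) :
    (d⁄dX ℚ)^[k] (PowerSeries.C c * x) = PowerSeries.C c * (d⁄dX ℚ)^[k] x := by
  induction k generalizing x with
  | zero => simp
  | succ k ih =>
      have hstep : d⁄dX ℚ (PowerSeries.C c * x) = PowerSeries.C c * d⁄dX ℚ x := by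
        rw [Derivation.leibniz, smul_eq_mul, smul_eq_mul]; simp
      rw [Function.iterate_succ_apply, Function.iterate_succ_apply, hstep, ih]

lemma T_mul_deriv_pow (T : PowerSeries ℚ) (k : ℕ) :
    T * d⁄dX ℚ (T ^ k) = (k : PowerSeries ℚ) * T ^ k * d⁄dX ℚ T := by
  induction k with
  | zero => simp
  | succ k ih =>
      rw [pow_succ, Derivation.leibniz, smul_eq_mul, smul_eq_mul]
      push_cast
      ring_nf
      ring_nf at ih
      linear_combination T * ih

lemma constCoeff_iter (k : ℕ) (f : PowerSeries ℚ) :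
    PowerSeries.constantCoeff ((d⁄dX ℚ)^[k] f)
      = (k.factorial : ℚ) * PowerSeries.coeff k f := by
  induction k generalizing f with
  | zero => simp [PowerSeries.coeff_zero_eq_constantCoeff]
  | succ k ih =>
      rw [Function.iterate_succ_apply, ih, PowerSeries.coeff_derivative,
        Nat.factorial_succ]
      push_cast
      ring

lemma le_order_deriv (g : PowerSeries ℚ) (m : ℕ) (h : ((m + 1 : ℕ) : ℕ∞) ≤ g.order) :
    ((m : ℕ) : ℕ∞) ≤ (d⁄dX ℚ g).order := by
  apply PowerSeries.nat_le_order
  intro i hi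
  rw [PowerSeries.coeff_derivative, PowerSeries.coeff_of_lt_order, zero_mul]
  calc ((i + 1 : ℕ) : ℕ∞) < ((m + 1 : ℕ) : ℕ∞) := by exact_mod_cast Nat.succ_lt_succ hi
    _ ≤ g.order := h

lemma le_order_iter (g : PowerSeries ℚ) (n k : ℕ) (h : ((n + k : ℕ) : ℕ∞) ≤ g.order) :
    ((n : ℕ) : ℕ∞) ≤ ((d⁄dX ℚ)^[k] g).order := by
  induction k generalizing n with
  | zero => simpa using h
  | succ k ih =>
      rw [Function.iterate_succ_apply']
      apply le_order_deriv
      exact ih (n + 1) (by rw [show n + 1 + k = n + (k + 1) by omega]; exact h)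


/-- The key identity: `T^k · D^k (E · φP) = E · φ(S_k)` when `T·E' = B·E`. -/
lemma key_identity (α : ℚ) (T B P : Polynomial ℤ) (E : PowerSeries ℚ)
    (hE : phi α T * d⁄dX ℚ E = phi α B * E) (k : ℕ) :
    (phi α T) ^ k * (d⁄dX ℚ)^[k] (E * phi α P) = E * phi α (Sseq T B P k) := by
  induction k with
  | zero => simp [Sseq]
  | succ k ih =>
      have e1 := congrArg (d⁄dX ℚ) ih
      rw [Derivation.leibniz, Derivation.leibniz, smul_eq_mul, smul_eq_mul, smul_eq_mul,
        smul_eq_mul] at e1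
      have e2 := T_mul_deriv_pow (phi α T) k
      rw [Function.iterate_succ_apply']
      have hSmap : phi α (Sseq T B P (k+1))
          = phi α T * phi α (Polynomial.derivative (Sseq T B P k))
            - (k : PowerSeries ℚ) * phi α (Polynomial.derivative T) * phi α (Sseq T B P k)
            + phi α B * phi α (Sseq T B P k) := by
        show phi α (T * Polynomial.derivative (Sseq T B P k)
            - (k : Polynomial ℤ) * Polynomial.derivative T * Sseq T B P k
            + B * Sseq T B P k) = _
        push_cast [map_sub, map_add, map_mul, map_natCast]
        ring
      rw [hSmap, ← phi_derivative, ← phi_derivative]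
      linear_combination (phi α T) * e1 - ((d⁄dX ℚ)^[k] (E * phi α P)) * e2
        + (phi α (Sseq T B P k)) * hE - ((k : PowerSeries ℚ) * d⁄dX ℚ (phi α T)) * ih
lemma Sseq_zero (T B P : Polynomial ℤ) : Sseq T B P 0 = P := rfl

lemma Sseq_one (T B P : Polynomial ℤ) : Sseq T B P 1 = Pbr T B P 1 := by
  show Sseq T B P (0 + 1) = Pbr T B P (0 + 1)
  rw [Sseq, Pbr, show Sseq T B P 0 = P from rfl, show Pbr T B P 0 = P from rfl]
  push_cast
  ring

lemma Sseq_two (T B P : Polynomial ℤ) :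
    Sseq T B P 2 = Pbr T B P 2 - Polynomial.derivative T * Pbr T B P 1 := by
  show Sseq T B P (1 + 1) = Pbr T B P (1 + 1) - _
  rw [Sseq, Pbr, Sseq_one]
  push_cast
  ring

lemma order_contra (a : ℕ) (W g0 g1 g2 m0 m1 m2 : PowerSeries ℚ) (c : ℚ) (hc : c ≠ 0)
    (hW : W.order = (a : ℕ∞))
    (hid : PowerSeries.C c * W = g0 * m0 + g1 * m1 + g2 * m2)
    (h0 : ((a + 1 : ℕ) : ℕ∞) ≤ g0.order) (h1 : ((a + 1 : ℕ) : ℕ∞) ≤ g1.order)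
    (h2 : ((a + 1 : ℕ) : ℕ∞) ≤ g2.order) : False := by
  have hC : (PowerSeries.C c).order = 0 :=
    PowerSeries.order_zero_of_unit (PowerSeries.isUnit_iff_constantCoeff.mpr (by simpa using hc.isUnit))
  have hL : (PowerSeries.C c * W).order = (a : ℕ∞) := by
    rw [PowerSeries.order_mul, hC, hW, zero_add]
  have b0 : ((a + 1 : ℕ) : ℕ∞) ≤ (g0 * m0).order := by
    rw [PowerSeries.order_mul]; exact le_trans h0 le_self_add
  have b1 : ((a + 1 : ℕ) : ℕ∞) ≤ (g1 * m1).order := by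
    rw [PowerSeries.order_mul]; exact le_trans h1 le_self_add
  have b2 : ((a + 1 : ℕ) : ℕ∞) ≤ (g2 * m2).order := by
    rw [PowerSeries.order_mul]; exact le_trans h2 le_self_add
  have bound : ((a + 1 : ℕ) : ℕ∞) ≤ (g0 * m0 + g1 * m1 + g2 * m2).order := by
    refine le_trans (le_min (le_trans (le_min b0 b1) (PowerSeries.min_order_le_order_add _ _)) b2)
      (PowerSeries.min_order_le_order_add _ _)
  rw [← hid, hL] at bound
  have : a + 1 ≤ a := by exact_mod_cast bound
  omega
theorem main_rank (T : Polynomial ℤ) (B P : Fin 3 → Polynomial ℤ) (α : ℚ)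
    (hTα : Polynomial.aeval α T ≠ 0)
    (hΔ : Matrix.det (Matrix.of fun k i : Fin 3 => Pbr T (B i) (P i) (k : ℕ)) ≠ 0)
    (a : ℕ)
    (ha : a = Polynomial.rootMultiplicity α
      ((Matrix.det (Matrix.of fun k i : Fin 3 =>
          Pbr T (B i) (P i) (k : ℕ))).map (Int.castRingHom ℚ))) :
    Matrix.rank (Matrix.of fun (k : Fin (a + 3)) (i : Fin 3) =>
        Polynomial.eval α (Polynomial.C (((k : ℕ).factorial : ℚ)⁻¹) *
          (Sseq T (B i) (P i) (k : ℕ)).map (Int.castRingHom ℚ))) = 3 := by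
  -- basic facts about `φT`
  have hT0 : PowerSeries.constantCoeff (phi α T) ≠ 0 := by
    rw [phi_constantCoeff]; exact hTα
  have hTi : phi α T * (phi α T)⁻¹ = 1 := PowerSeries.mul_inv_cancel _ hT0
  have hTunit : IsUnit (phi α T) :=
    PowerSeries.isUnit_iff_constantCoeff.mpr (isUnit_iff_ne_zero.mpr hT0)
  -- the integrating factors and twisted functions
  set E : Fin 3 → PowerSeries ℚ := fun i => expS (phi α (B i) * (phi α T)⁻¹) with hEdef
  have hEunit : ∀ i, IsUnit (E i) := fun i => expS_isUnit _
  have hE : ∀ i, phi α T * d⁄dX ℚ (E i) = phi α (B i) * E i := by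
    intro i
    rw [hEdef]
    simp only
    rw [expS_deriv]
    linear_combination (phi α (B i) * expS (phi α (B i) * (phi α T)⁻¹)) * hTi
  set f : Fin 3 → PowerSeries ℚ := fun i => E i * phi α (P i) with hfdef
  have hS : ∀ (i : Fin 3) (k : ℕ),
      (phi α T) ^ k * (d⁄dX ℚ)^[k] (f i) = E i * phi α (Sseq T (B i) (P i) k) :=
    fun i k => key_identity α T (B i) (P i) (E i) (hE i) k
  -- the determinant identity in `ℤ[X]`
  set Δ : Polynomial ℤ := Matrix.det (Matrix.of fun k i : Fin 3 =>
    Pbr T (B i) (P i) (k : ℕ)) with hΔdef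
  have hdet_eq : Matrix.det (Matrix.of fun k i : Fin 3 =>
      Sseq T (B i) (P i) (k : ℕ)) = Δ := by
    rw [hΔdef, Matrix.det_fin_three, Matrix.det_fin_three]
    simp only [Matrix.of_apply, Fin.val_zero, Fin.val_one, Fin.val_two,
      Sseq_zero, Sseq_one, Sseq_two, show ∀ Q R S : Polynomial ℤ, Pbr Q R S 0 = S from fun _ _ _ => rfl]
    ring
  -- the power-series Wronskian
  set W : PowerSeries ℚ := Matrix.det (Matrix.of fun k i : Fin 3 =>
    (d⁄dX ℚ)^[(k : ℕ)] (f i)) with hWdef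
  have hmat : (Matrix.of fun k i : Fin 3 => E i * phi α (Sseq T (B i) (P i) (k : ℕ)))
      = (Matrix.of fun k i : Fin 3 => (phi α T) ^ (k : ℕ) * (d⁄dX ℚ)^[(k : ℕ)] (f i)) := by
    refine Matrix.ext fun k i => ?_
    exact (hS i k).symm
  have hW : (E 0 * E 1 * E 2) * phi α Δ = (phi α T) ^ 3 * W := by
    calc (E 0 * E 1 * E 2) * phi α Δ
        = (∏ i : Fin 3, E i) *
            (Matrix.of fun k i : Fin 3 =>
              phi α (Sseq T (B i) (P i) (k : ℕ))).det := by
          rw [← hdet_eq, RingHom.map_det, Fin.prod_univ_three]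
          congr 1
      _ = (Matrix.of fun k i : Fin 3 =>
              E i * phi α (Sseq T (B i) (P i) (k : ℕ))).det :=
          (Matrix.det_mul_row E _).symm
      _ = (Matrix.of fun k i : Fin 3 =>
              (phi α T) ^ (k : ℕ) * (d⁄dX ℚ)^[(k : ℕ)] (f i)).det := by rw [hmat]
      _ = (∏ k : Fin 3, (phi α T) ^ (k : ℕ)) * W :=
          Matrix.det_mul_column (fun k : Fin 3 => (phi α T) ^ (k : ℕ)) _
      _ = (phi α T) ^ 3 * W := by
          rw [Fin.prod_univ_three]
          simp only [Fin.val_zero, Fin.val_one, Fin.val_two]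
          ring
  have hΔmap : Δ.map (Int.castRingHom ℚ) ≠ 0 :=
    (Polynomial.map_ne_zero_iff (Int.cast_injective)).mpr hΔ
  have hΔorder : (phi α Δ).order = (a : ℕ∞) := by
    rw [phi_order α Δ hΔ, ← ha]
  have hWorder : W.order = (a : ℕ∞) := by
    have h6 := congrArg PowerSeries.order hW
    rw [PowerSeries.order_mul, PowerSeries.order_mul, PowerSeries.order_mul,
      PowerSeries.order_mul, hΔorder,
      PowerSeries.order_zero_of_unit (hEunit 0), PowerSeries.order_zero_of_unit (hEunit 1),
      PowerSeries.order_zero_of_unit (hEunit 2),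
      PowerSeries.order_zero_of_unit (hTunit.pow 3)] at h6
    simpa using h6.symm
  -- the matrix entries
  have hentry : ∀ (k : ℕ) (i : Fin 3),
      Polynomial.eval α (Polynomial.C ((k.factorial : ℚ)⁻¹) *
        (Sseq T (B i) (P i) k).map (Int.castRingHom ℚ))
      = (Polynomial.aeval α T) ^ k * PowerSeries.coeff k (f i) := by
    intro k i
    have e := (congrArg (PowerSeries.constantCoeff) (hS i k)).symm
    rw [map_mul, map_mul, map_pow, phi_constantCoeff, phi_constantCoeff, constCoeff_iter,
      show PowerSeries.constantCoeff (E i) = 1 from expS_constantCoeff _, one_mul] at e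
    have hfac : (k.factorial : ℚ) ≠ 0 := Nat.cast_ne_zero.mpr k.factorial_ne_zero
    rw [Polynomial.eval_mul, Polynomial.eval_C,
      show Polynomial.eval α ((Sseq T (B i) (P i) k).map (Int.castRingHom ℚ))
        = Polynomial.aeval α (Sseq T (B i) (P i) k) from by
          rw [Polynomial.eval_map, Polynomial.aeval_def, algebraMap_int_eq], e]
    field_simp
  -- injectivity of the column map
  have hinj : Function.Injective (Matrix.mulVecLin (Matrix.of
      fun (k : Fin (a + 3)) (i : Fin 3) =>
        Polynomial.eval α (Polynomial.C (((k : ℕ).factorial : ℚ)⁻¹) *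
          (Sseq T (B i) (P i) (k : ℕ)).map (Int.castRingHom ℚ)))) := by
    rw [← LinearMap.ker_eq_bot, LinearMap.ker_eq_bot']
    intro c hc
    by_contra hcne
    obtain ⟨j, hj⟩ : ∃ j, c j ≠ 0 := by
      by_contra h
      push_neg at h
      exact hcne (funext h)
    set gg : PowerSeries ℚ := PowerSeries.C (c 0) * f 0 + PowerSeries.C (c 1) * f 1
      + PowerSeries.C (c 2) * f 2 with hggdef
    have hTα0 : ∀ k : ℕ, (Polynomial.aeval α T) ^ k ≠ 0 := fun k => pow_ne_zero _ hTα
    have hcoeff : ∀ k < a + 3, PowerSeries.coeff k gg = 0 := by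
      intro k hk
      have hv := congrFun hc (⟨k, hk⟩ : Fin (a + 3))
      rw [Matrix.mulVecLin_apply] at hv
      simp only [Matrix.mulVec, dotProduct, Fin.sum_univ_three, Matrix.of_apply,
        Fin.val_mk, Pi.zero_apply] at hv
      rw [hentry k 0, hentry k 1, hentry k 2] at hv
      have h9 : (Polynomial.aeval α T) ^ k * PowerSeries.coeff k gg = 0 := by
        rw [hggdef]
        simp only [map_add, PowerSeries.coeff_C_mul]
        linear_combination hv
      exact (mul_eq_zero.mp h9).resolve_left (hTα0 k)
    have hggord : ((a + 3 : ℕ) : ℕ∞) ≤ gg.order := PowerSeries.nat_le_order _ _ hcoeff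
    have horder : ∀ k : ℕ, k ≤ 2 → ((a + 1 : ℕ) : ℕ∞) ≤ ((d⁄dX ℚ)^[k] gg).order := by
      intro k hk
      apply le_order_iter gg (a + 1) k
      exact le_trans (by exact_mod_cast (by omega : a + 1 + k ≤ a + 3)) hggord
    have hWex : W =
        (d⁄dX ℚ)^[0] (f 0) * ((d⁄dX ℚ)^[1] (f 1) * (d⁄dX ℚ)^[2] (f 2)
            - (d⁄dX ℚ)^[1] (f 2) * (d⁄dX ℚ)^[2] (f 1))
        - (d⁄dX ℚ)^[0] (f 1) * ((d⁄dX ℚ)^[1] (f 0) * (d⁄dX ℚ)^[2] (f 2)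
            - (d⁄dX ℚ)^[1] (f 2) * (d⁄dX ℚ)^[2] (f 0))
        + (d⁄dX ℚ)^[0] (f 2) * ((d⁄dX ℚ)^[1] (f 0) * (d⁄dX ℚ)^[2] (f 1)
            - (d⁄dX ℚ)^[1] (f 1) * (d⁄dX ℚ)^[2] (f 0)) := by
      rw [hWdef, Matrix.det_fin_three]
      simp only [Matrix.of_apply, Fin.val_zero, Fin.val_one, Fin.val_two]
      ring
    have hDgg : ∀ k : ℕ, (d⁄dX ℚ)^[k] gg
        = PowerSeries.C (c 0) * (d⁄dX ℚ)^[k] (f 0)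
          + PowerSeries.C (c 1) * (d⁄dX ℚ)^[k] (f 1)
          + PowerSeries.C (c 2) * (d⁄dX ℚ)^[k] (f 2) := fun k => by
      rw [hggdef, iter_add, iter_add, iter_Cmul, iter_Cmul, iter_Cmul]
    fin_cases j
    · exact order_contra a W ((d⁄dX ℚ)^[0] gg) ((d⁄dX ℚ)^[1] gg) ((d⁄dX ℚ)^[2] gg)
        ((d⁄dX ℚ)^[1] (f 1) * (d⁄dX ℚ)^[2] (f 2) - (d⁄dX ℚ)^[2] (f 1) * (d⁄dX ℚ)^[1] (f 2))
        (-((d⁄dX ℚ)^[0] (f 1) * (d⁄dX ℚ)^[2] (f 2) - (d⁄dX ℚ)^[2] (f 1) * (d⁄dX ℚ)^[0] (f 2)))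
        ((d⁄dX ℚ)^[0] (f 1) * (d⁄dX ℚ)^[1] (f 2) - (d⁄dX ℚ)^[1] (f 1) * (d⁄dX ℚ)^[0] (f 2))
        (c 0) hj hWorder
        (by rw [hDgg 0, hDgg 1, hDgg 2, hWex]; ring)
        (horder 0 (by norm_num)) (horder 1 (by norm_num)) (horder 2 (by norm_num))
    · exact order_contra a W ((d⁄dX ℚ)^[0] gg) ((d⁄dX ℚ)^[1] gg) ((d⁄dX ℚ)^[2] gg)
        (-((d⁄dX ℚ)^[1] (f 0) * (d⁄dX ℚ)^[2] (f 2) - (d⁄dX ℚ)^[2] (f 0) * (d⁄dX ℚ)^[1] (f 2)))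
        ((d⁄dX ℚ)^[0] (f 0) * (d⁄dX ℚ)^[2] (f 2) - (d⁄dX ℚ)^[2] (f 0) * (d⁄dX ℚ)^[0] (f 2))
        (-((d⁄dX ℚ)^[0] (f 0) * (d⁄dX ℚ)^[1] (f 2) - (d⁄dX ℚ)^[1] (f 0) * (d⁄dX ℚ)^[0] (f 2)))
        (c 1) hj hWorder
        (by rw [hDgg 0, hDgg 1, hDgg 2, hWex]; ring)
        (horder 0 (by norm_num)) (horder 1 (by norm_num)) (horder 2 (by norm_num))
    · exact order_contra a W ((d⁄dX ℚ)^[0] gg) ((d⁄dX ℚ)^[1] gg) ((d⁄dX ℚ)^[2] gg)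
        ((d⁄dX ℚ)^[1] (f 0) * (d⁄dX ℚ)^[2] (f 1) - (d⁄dX ℚ)^[2] (f 0) * (d⁄dX ℚ)^[1] (f 1))
        (-((d⁄dX ℚ)^[0] (f 0) * (d⁄dX ℚ)^[2] (f 1) - (d⁄dX ℚ)^[2] (f 0) * (d⁄dX ℚ)^[0] (f 1)))
        ((d⁄dX ℚ)^[0] (f 0) * (d⁄dX ℚ)^[1] (f 1) - (d⁄dX ℚ)^[1] (f 0) * (d⁄dX ℚ)^[0] (f 1))
        (c 2) hj hWorder
        (by rw [hDgg 0, hDgg 1, hDgg 2, hWex]; ring)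
        (horder 0 (by norm_num)) (horder 1 (by norm_num)) (horder 2 (by norm_num))
  rw [Matrix.rank, LinearMap.finrank_range_of_inj hinj, Module.finrank_fin_fun]
end AngleAux

/-- **The `P_i^{⟨k⟩}(α)` matrix has full rank** (Lemma 6.3).
Suppose the determinant `Δ` of the `3×3` matrix of `P_i^{[k]}` is nonzero, `α ∈ ℚ` is nonzero
with `T(α) ≠ 0`, and `a` is the multiplicity of `α` as a root of `Δ`. Then the `(a+3)×3`
matrix with entries `P_i^{⟨k⟩}(α)` has rank three. -/
theorem angle_matrix_full_rank (r M : ℕ) (hr : 2 ≤ r) (hM : 2 ≤ M)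
    (β₁ β₂ : ℕ) (hβ₁ : 2 ≤ β₁) (hβ₁₂ : β₁ < β₂) (hβ₂ : β₂ ≤ M)
    (P₀ P₁ P₂ : Polynomial ℤ)
    (hΔ : Matrix.det (Matrix.of fun k i : Fin 3 =>
        Pbr (Tpoly r M) (![0, Bpoly M β₁, Bpoly M β₂] i) (![P₀, P₁, P₂] i) (k : ℕ)) ≠ 0)
    (α : ℚ) (hα : α ≠ 0) (hTα : Polynomial.aeval α (Tpoly r M) ≠ 0)
    (a : ℕ)
    (ha : a = Polynomial.rootMultiplicity α
      ((Matrix.det (Matrix.of fun k i : Fin 3 =>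
          Pbr (Tpoly r M) (![0, Bpoly M β₁, Bpoly M β₂] i) (![P₀, P₁, P₂] i)
            (k : ℕ))).map (Int.castRingHom ℚ))) :
    Matrix.rank (Matrix.of fun (k : Fin (a + 3)) (i : Fin 3) =>
        Polynomial.eval α
          (Pang (Tpoly r M) (![0, Bpoly M β₁, Bpoly M β₂] i) (![P₀, P₁, P₂] i) (k : ℕ)))
      = 3 := by
  simp only [Pang]
  exact AngleAux.main_rank (Tpoly r M) ![0, Bpoly M β₁, Bpoly M β₂] ![P₀, P₁, P₂] α hTα hΔ a ha
end
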